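/- arXiv:2306.10278 — 9 statements merged into one kernel-verified Lean document; each statement's English description precedes it below -/
import Mathlib

section
/- Let F: ℝ^d → ℝ be differentiable and convex, let X ⊆ ℝ^d be a closed convex set with diameter D = max_{x,y∈X} ‖x−y‖₂, and let x* ∈ X be a minimizer of F over X. Assume ∇F(x_t) ≠ 0 for every iterate below. Consider AdaGrad with a global step size: starting from x₁ ∈ X, for t = 1,…,T set Q_t = Σ_{i=1}^t ‖∇F(x_i)‖₂², η_t = D/√(2Q_t), and x_{t+1} = Π_X(x_t − η_t ∇F(x_t)), where Π_X is the Euclidean projection onto X. Then the average x̄ = (1/T)Σ_{t=1}^T x_t satisfies F(x̄) − F(x*) ≤ (√2·D/T)·√(Σ_{t=1}^T ‖∇F(x_t)‖₂²). -/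
open scoped BigOperators

section AuxAdagrad

open scoped RealInnerProductSpace

variable {E : Type*} [NormedAddCommGroup E] [InnerProductSpace ℝ E] [CompleteSpace E]

lemma my_proj_sq_le {X : Set E} (hXconv : Convex ℝ X)
    (proj : E → E) (hprojmem : ∀ z, proj z ∈ X)
    (hproj : ∀ z, ∀ y ∈ X, ‖proj z - z‖ ≤ ‖y - z‖)
    (z : E) {y : E} (hy : y ∈ X) : ‖proj z - y‖ ^ 2 ≤ ‖z - y‖ ^ 2 := by
  have hne : Nonempty X := ⟨⟨proj z, hprojmem z⟩⟩
  have hinf : ‖z - proj z‖ = ⨅ w : X, ‖z - w‖ := by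
    refine le_antisymm (le_ciInf fun w => ?_) ?_
    · rw [norm_sub_rev, norm_sub_rev z]
      exact hproj z w w.2
    · exact ciInf_le (f := fun w : X => ‖z - (w : E)‖)
        ⟨0, Set.forall_mem_range.2 fun w => norm_nonneg _⟩ ⟨proj z, hprojmem z⟩
  have hvar : ∀ w ∈ X, ⟪z - proj z, w - proj z⟫ ≤ 0 :=
    (norm_eq_iInf_iff_real_inner_le_zero hXconv (hprojmem z)).mp hinf
  have h := hvar y hy
  have hexp : ‖z - y‖ ^ 2 =
      ‖z - proj z‖ ^ 2 + 2 * ⟪z - proj z, proj z - y⟫ + ‖proj z - y‖ ^ 2 := by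
    have := norm_add_sq_real (z - proj z) (proj z - y)
    rw [show z - proj z + (proj z - y) = z - y by abel] at this
    linarith
  have hflip : ⟪z - proj z, proj z - y⟫ = -⟪z - proj z, y - proj z⟫ := by
    rw [show proj z - y = -(y - proj z) by abel, inner_neg_right]
  nlinarith [sq_nonneg ‖z - proj z‖]

lemma my_grad_ineq {F : E → ℝ} (hF : Differentiable ℝ F)
    (hconv : ConvexOn ℝ Set.univ F) (u v : E) :
    ⟪gradient F u, v - u⟫ ≤ F v - F u := by
  set φ : ℝ → ℝ := fun s => F (s • (v - u) + u) with hφdef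
  have hφconv : ConvexOn ℝ Set.univ φ := by
    have := hconv.comp_affineMap (AffineMap.lineMap u v : ℝ →ᵃ[ℝ] E)
    simpa [Function.comp_def, AffineMap.lineMap_apply, φ] using this
  have hline : HasDerivAt (fun s : ℝ => s • (v - u) + u) (v - u) 0 := by
    simpa using ((hasDerivAt_id (0:ℝ)).smul_const (v - u)).add_const u
  have hg := (hF u).hasGradientAt
  rw [hasGradientAt_iff_hasFDerivAt] at hg
  have hcomp : HasDerivAt φ ⟪gradient F u, v - u⟫ 0 := by
    have h0 : (fun s : ℝ => s • (v - u) + u) 0 = u := by simp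
    have := (h0 ▸ hg).comp_hasDerivAt 0 hline
    simpa [φ, Function.comp_def, InnerProductSpace.toDual_apply_apply] using this
  have := hφconv.le_slope_of_hasDerivAt (Set.mem_univ 0) (Set.mem_univ 1) one_pos hcomp
  rw [slope_def_field] at this
  simpa [φ] using this

end AuxAdagrad

open scoped RealInnerProductSpace

/-- AdaGrad with a global step size on a convex function over a bounded closed convex set. -/
theorem adagrad_global_stepsize_bound {d : ℕ}
    (F : EuclideanSpace ℝ (Fin d) → ℝ)
    (X : Set (EuclideanSpace ℝ (Fin d)))
    (hF : Differentiable ℝ F) (hconv : ConvexOn ℝ Set.univ F)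
    (hXconv : Convex ℝ X) (hXclosed : IsClosed X)
    (D : ℝ) (hD : ∀ x ∈ X, ∀ y ∈ X, ‖x - y‖ ≤ D)
    (xstar : EuclideanSpace ℝ (Fin d)) (hxstar : xstar ∈ X)
    (hmin : ∀ y ∈ X, F xstar ≤ F y)
    (proj : EuclideanSpace ℝ (Fin d) → EuclideanSpace ℝ (Fin d))
    (hprojmem : ∀ z, proj z ∈ X)
    (hproj : ∀ z, ∀ y ∈ X, ‖proj z - z‖ ≤ ‖y - z‖)
    (T : ℕ) (hT : 1 ≤ T)
    (x : ℕ → EuclideanSpace ℝ (Fin d)) (hx1 : x 1 ∈ X)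
    (hgrad : ∀ t ∈ Finset.Icc 1 T, gradient F (x t) ≠ 0)
    (hupdate : ∀ t ∈ Finset.Icc 1 T,
      x (t + 1) = proj (x t -
        (D / Real.sqrt (2 * ∑ i ∈ Finset.Icc 1 t, ‖gradient F (x i)‖ ^ 2)) •
          gradient F (x t))) :
    F ((T : ℝ)⁻¹ • ∑ t ∈ Finset.Icc 1 T, x t) - F xstar ≤
      Real.sqrt 2 * D / T * Real.sqrt (∑ t ∈ Finset.Icc 1 T, ‖gradient F (x t)‖ ^ 2) := by
  classical
  obtain ⟨g, hg⟩ : ∃ g : ℕ → EuclideanSpace ℝ (Fin d), ∀ t, g t = gradient F (x t) :=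
    ⟨_, fun _ => rfl⟩
  simp only [← hg] at hupdate hgrad ⊢
  obtain ⟨Q, hQ⟩ : ∃ Q : ℕ → ℝ, ∀ t, Q t = ∑ i ∈ Finset.Icc 1 t, ‖g i‖ ^ 2 :=
    ⟨_, fun _ => rfl⟩
  simp only [← hQ] at hupdate ⊢
  obtain ⟨η, hη⟩ : ∃ η : ℕ → ℝ, ∀ t, η t = D / Real.sqrt (2 * Q t) := ⟨_, fun _ => rfl⟩
  simp only [← hη] at hupdate
  obtain ⟨a, ha⟩ : ∃ a : ℕ → ℝ, ∀ t, a t = ‖x t - xstar‖ ^ 2 := ⟨_, fun _ => rfl⟩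
  obtain ⟨c, hc⟩ : ∃ c : ℕ → ℝ, ∀ t, c t = Real.sqrt (2 * Q t) / (2 * D) := ⟨_, fun _ => rfl⟩
  have hcard : (Finset.Icc 1 T).card = T := by rw [Nat.card_Icc]; omega
  -- all iterates are in X
  have hxmem : ∀ t, 1 ≤ t → t ≤ T + 1 → x t ∈ X := by
    intro t ht
    induction t, ht using Nat.le_induction with
    | base => intro _; exact hx1
    | succ n hn ih =>
      intro h
      rw [hupdate n (Finset.mem_Icc.mpr ⟨hn, by omega⟩)]
      exact hprojmem _
  have hD0 : 0 ≤ D := le_trans (norm_nonneg _) (hD (x 1) hx1 (x 1) hx1)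
  have hTpos : (0:ℝ) < T := by exact_mod_cast hT
  rcases eq_or_lt_of_le hD0 with hDeq | hDpos
  · -- degenerate case D = 0 : all iterates coincide with xstar
    have hxeq : ∀ t ∈ Finset.Icc 1 T, x t = xstar := by
      intro t ht
      rw [Finset.mem_Icc] at ht
      have h1 := hD (x t) (hxmem t ht.1 (by omega)) xstar hxstar
      rw [← hDeq] at h1
      have h2 : ‖x t - xstar‖ = 0 := le_antisymm h1 (norm_nonneg _)
      exact sub_eq_zero.mp (norm_eq_zero.mp h2)
    have hsum : ∑ t ∈ Finset.Icc 1 T, x t = (T : ℕ) • xstar := by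
      rw [Finset.sum_congr rfl hxeq, Finset.sum_const, hcard]
    rw [hsum]
    have hsm : (T : ℝ)⁻¹ • ((T : ℕ) • xstar) = xstar := by
      rw [← Nat.cast_smul_eq_nsmul ℝ, smul_smul, inv_mul_cancel₀ (ne_of_gt hTpos), one_smul]
    rw [hsm, sub_self, ← hDeq]
    have h0 : Real.sqrt 2 * 0 / (T:ℝ) * Real.sqrt (Q T) = 0 := by ring
    rw [h0]
  -- main case D > 0
  have hQpos : ∀ t, 1 ≤ t → 0 < Q t := by
    intro t ht
    rw [hQ]
    refine Finset.sum_pos' (fun i _ => by positivity)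
      ⟨1, Finset.mem_Icc.mpr ⟨le_refl 1, ht⟩, ?_⟩
    have hg1 : g 1 ≠ 0 := hgrad 1 (Finset.mem_Icc.mpr ⟨le_refl 1, hT⟩)
    exact pow_pos (norm_pos_iff.mpr hg1) 2
  have hQmono : ∀ t, Q t ≤ Q (t + 1) := by
    intro t
    rw [hQ, hQ]
    apply Finset.sum_le_sum_of_subset_of_nonneg
      (Finset.Icc_subset_Icc_right (Nat.le_succ t))
    intro i _ _; positivity
  have hηpos : ∀ t, 1 ≤ t → 0 < η t := by
    intro t ht
    have := hQpos t ht
    rw [hη]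
    exact div_pos hDpos (Real.sqrt_pos.mpr (by linarith))
  have hcpos : ∀ t, 1 ≤ t → 0 < c t := by
    intro t ht
    have := hQpos t ht
    rw [hc]
    exact div_pos (Real.sqrt_pos.mpr (by linarith)) (by linarith)
  have hcmono : ∀ t, c t ≤ c (t + 1) := by
    intro t
    have hQle := hQmono t
    rw [hc, hc]
    gcongr
  have haD : ∀ n, 1 ≤ n → n ≤ T + 1 → a n ≤ D ^ 2 := by
    intro n h1 h2
    rw [ha]
    exact pow_le_pow_left₀ (norm_nonneg _) (hD (x n) (hxmem n h1 h2) xstar hxstar) 2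
  have hanonneg : ∀ n, 0 ≤ a n := fun n => by rw [ha]; positivity
  -- per-step inequality
  have hstep : ∀ t ∈ Finset.Icc 1 T,
      ⟪g t, x t - xstar⟫ ≤ (a t - a (t + 1)) * c t + η t / 2 * ‖g t‖ ^ 2 := by
    intro t ht
    obtain ⟨ht1, ht2⟩ := Finset.mem_Icc.mp ht
    have hηt := hηpos t ht1
    have hstep1 : a (t + 1) ≤ ‖(x t - xstar) - η t • g t‖ ^ 2 := by
      rw [ha, hupdate t ht]
      have := my_proj_sq_le hXconv proj hprojmem hproj (x t - η t • g t) hxstar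
      rw [show x t - η t • g t - xstar = (x t - xstar) - η t • g t by abel] at this
      exact this
    have hexp : ‖(x t - xstar) - η t • g t‖ ^ 2 =
        a t - 2 * η t * ⟪g t, x t - xstar⟫ + η t ^ 2 * ‖g t‖ ^ 2 := by
      rw [ha]
      rw [@norm_sub_sq_real]
      rw [real_inner_smul_right, norm_smul, real_inner_comm]
      rw [Real.norm_eq_abs, mul_pow, sq_abs]
      ring
    have key : 2 * η t * ⟪g t, x t - xstar⟫ ≤ a t - a (t + 1) + η t ^ 2 * ‖g t‖ ^ 2 := by
      rw [hexp] at hstep1; linarith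
    have hdiv : ⟪g t, x t - xstar⟫ ≤
        (a t - a (t + 1) + η t ^ 2 * ‖g t‖ ^ 2) / (2 * η t) := by
      rw [le_div_iff₀ (by linarith : (0:ℝ) < 2 * η t)]
      nlinarith [key]
    have hsplit : (a t - a (t + 1) + η t ^ 2 * ‖g t‖ ^ 2) / (2 * η t) =
        (a t - a (t + 1)) * c t + η t / 2 * ‖g t‖ ^ 2 := by
      have hs : Real.sqrt (2 * Q t) > 0 := Real.sqrt_pos.mpr (by
        have := hQpos t ht1; linarith)
      rw [hη, hc]
      generalize hgen : Real.sqrt (2 * Q t) = s at hs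
      field_simp
    rw [hsplit] at hdiv
    exact hdiv
  -- telescoping bound
  have htel : ∀ n, 1 ≤ n → n ≤ T →
      (∑ t ∈ Finset.Icc 1 n, (a t - a (t + 1)) * c t) + a (n + 1) * c n ≤ D ^ 2 * c n := by
    intro n hn
    induction n, hn using Nat.le_induction with
    | base =>
      intro _
      rw [show Finset.Icc 1 1 = {1} from rfl, Finset.sum_singleton]
      have h1 := haD 1 le_rfl (by omega)
      have h2 := (hcpos 1 le_rfl).le
      nlinarith
    | succ n hn ih =>
      intro h
      have ihh := ih (by omega)
      rw [Finset.sum_Icc_succ_top (by omega : 1 ≤ n + 1)]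
      have h1 := haD (n + 1) (by omega) (by omega)
      have h2 := hcmono n
      have h3 := (hcpos n hn).le
      nlinarith [mul_le_mul_of_nonneg_right h1 (sub_nonneg.mpr h2)]
  -- second sum bound
  have hsum2 : ∀ n, 1 ≤ n → n ≤ T →
      ∑ t ∈ Finset.Icc 1 n, ‖g t‖ ^ 2 / Real.sqrt (Q t) ≤ 2 * Real.sqrt (Q n) := by
    intro n hn
    induction n, hn using Nat.le_induction with
    | base =>
      intro _
      rw [show Finset.Icc 1 1 = {1} from rfl, Finset.sum_singleton]
      have hQ1 : Q 1 = ‖g 1‖ ^ 2 := by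
        rw [hQ, show Finset.Icc 1 1 = {1} from rfl, Finset.sum_singleton]
      rw [← hQ1, Real.div_sqrt]
      have := Real.sqrt_nonneg (Q 1)
      linarith
    | succ n hn ih =>
      intro h
      have ihh := ih (by omega)
      rw [Finset.sum_Icc_succ_top (by omega : 1 ≤ n + 1)]
      have hQsucc : Q (n + 1) = Q n + ‖g (n + 1)‖ ^ 2 := by
        rw [hQ, hQ, Finset.sum_Icc_succ_top (by omega : 1 ≤ n + 1)]
      have hqn : 0 < Q n := hQpos n hn
      have hqs : 0 < Q (n + 1) := hQpos (n + 1) (by omega)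
      have hp2 : Real.sqrt (Q n) ^ 2 = Q n := Real.sq_sqrt hqn.le
      have hq2 : Real.sqrt (Q (n + 1)) ^ 2 = Q (n + 1) := Real.sq_sqrt hqs.le
      have hqpos : 0 < Real.sqrt (Q (n + 1)) := Real.sqrt_pos.mpr hqs
      have hppos : 0 ≤ Real.sqrt (Q n) := Real.sqrt_nonneg _
      have hterm : ‖g (n + 1)‖ ^ 2 / Real.sqrt (Q (n + 1)) ≤
          2 * Real.sqrt (Q (n + 1)) - 2 * Real.sqrt (Q n) := by
        rw [div_le_iff₀ hqpos]
        nlinarith [sq_nonneg (Real.sqrt (Q (n + 1)) - Real.sqrt (Q n))]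
      linarith
  -- combine the two sums
  have h2Q : Real.sqrt (2 * Q T) = Real.sqrt 2 * Real.sqrt (Q T) :=
    Real.sqrt_mul (by norm_num) _
  have hs2 : (0:ℝ) < Real.sqrt 2 := Real.sqrt_pos.mpr (by norm_num)
  have hs22 : Real.sqrt 2 * Real.sqrt 2 = 2 := Real.mul_self_sqrt (by norm_num)
  have hsumkey : ∑ t ∈ Finset.Icc 1 T, ⟪g t, x t - xstar⟫ ≤
      Real.sqrt 2 * D * Real.sqrt (Q T) := by
    have hQTpos : 0 < Q T := hQpos T hT
    have hsqQT : 0 < Real.sqrt (Q T) := Real.sqrt_pos.mpr hQTpos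
    have step1 : ∑ t ∈ Finset.Icc 1 T, ⟪g t, x t - xstar⟫ ≤
        ∑ t ∈ Finset.Icc 1 T, ((a t - a (t + 1)) * c t + η t / 2 * ‖g t‖ ^ 2) :=
      Finset.sum_le_sum hstep
    rw [Finset.sum_add_distrib] at step1
    have step2 : ∑ t ∈ Finset.Icc 1 T, (a t - a (t + 1)) * c t ≤ D ^ 2 * c T := by
      have := htel T hT le_rfl
      nlinarith [mul_nonneg (hanonneg (T + 1)) (hcpos T hT).le]
    have hrw : ∀ t ∈ Finset.Icc 1 T,
        η t / 2 * ‖g t‖ ^ 2 = D / (2 * Real.sqrt 2) * (‖g t‖ ^ 2 / Real.sqrt (Q t)) := by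
      intro t ht
      obtain ⟨ht1, _⟩ := Finset.mem_Icc.mp ht
      have hqt : 0 < Q t := hQpos t ht1
      have hsq : 0 < Real.sqrt (Q t) := Real.sqrt_pos.mpr hqt
      rw [hη, Real.sqrt_mul (by norm_num : (0:ℝ) ≤ 2)]
      ring
    have step3 : ∑ t ∈ Finset.Icc 1 T, η t / 2 * ‖g t‖ ^ 2 ≤
        D / (2 * Real.sqrt 2) * (2 * Real.sqrt (Q T)) := by
      rw [Finset.sum_congr rfl hrw, ← Finset.mul_sum]
      exact mul_le_mul_of_nonneg_left (hsum2 T hT le_rfl) (by positivity)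
    have hfinal : D ^ 2 * c T + D / (2 * Real.sqrt 2) * (2 * Real.sqrt (Q T)) =
        Real.sqrt 2 * D * Real.sqrt (Q T) := by
      rw [hc, h2Q]
      have hs2' := hs2
      have hs22' := hs22
      generalize Real.sqrt (Q T) = s at hsqQT ⊢
      generalize Real.sqrt 2 = r at hs2' hs22' ⊢
      field_simp
      linear_combination (-1 : ℝ) * hs22'
    linarith
  -- Jensen + gradient inequality
  have hgradineq : ∀ t ∈ Finset.Icc 1 T, F (x t) - F xstar ≤ ⟪g t, x t - xstar⟫ := by
    intro t ht
    have := my_grad_ineq hF hconv (x t) xstar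
    rw [← hg] at this
    rw [show x t - xstar = -(xstar - x t) by abel, inner_neg_right]
    linarith
  have hjensen : F ((T : ℝ)⁻¹ • ∑ t ∈ Finset.Icc 1 T, x t) ≤
      ∑ t ∈ Finset.Icc 1 T, (T : ℝ)⁻¹ * F (x t) := by
    have hw : ∑ _t ∈ Finset.Icc 1 T, (T : ℝ)⁻¹ = 1 := by
      rw [Finset.sum_const, hcard, nsmul_eq_mul, mul_inv_cancel₀ (ne_of_gt hTpos)]
    have := hconv.map_sum_le (t := Finset.Icc 1 T) (w := fun _ => (T : ℝ)⁻¹)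
      (p := x) (fun _ _ => by positivity) hw (fun _ _ => Set.mem_univ _)
    rwa [← Finset.smul_sum] at this
  have hmain : F ((T : ℝ)⁻¹ • ∑ t ∈ Finset.Icc 1 T, x t) - F xstar ≤
      (T : ℝ)⁻¹ * ∑ t ∈ Finset.Icc 1 T, ⟪g t, x t - xstar⟫ := by
    have h1 : ∑ t ∈ Finset.Icc 1 T, (T : ℝ)⁻¹ * F (x t) - F xstar =
        (T : ℝ)⁻¹ * ∑ t ∈ Finset.Icc 1 T, (F (x t) - F xstar) := by
      rw [Finset.sum_sub_distrib, Finset.sum_const, hcard, ← Finset.mul_sum, mul_sub,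
        nsmul_eq_mul]
      rw [← mul_assoc, inv_mul_cancel₀ (ne_of_gt hTpos), one_mul]
    have h2 : ∑ t ∈ Finset.Icc 1 T, (F (x t) - F xstar) ≤
        ∑ t ∈ Finset.Icc 1 T, ⟪g t, x t - xstar⟫ := Finset.sum_le_sum hgradineq
    have h3 := hjensen
    have h4 : (T:ℝ)⁻¹ * ∑ t ∈ Finset.Icc 1 T, (F (x t) - F xstar) ≤
        (T : ℝ)⁻¹ * ∑ t ∈ Finset.Icc 1 T, ⟪g t, x t - xstar⟫ :=
      mul_le_mul_of_nonneg_left h2 (by positivity)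
    linarith
  have hlast : (T : ℝ)⁻¹ * (Real.sqrt 2 * D * Real.sqrt (Q T)) =
      Real.sqrt 2 * D / (T : ℝ) * Real.sqrt (Q T) := by
    field_simp
  calc F ((T : ℝ)⁻¹ • ∑ t ∈ Finset.Icc 1 T, x t) - F xstar
      ≤ (T : ℝ)⁻¹ * ∑ t ∈ Finset.Icc 1 T, ⟪g t, x t - xstar⟫ := hmain
    _ ≤ (T : ℝ)⁻¹ * (Real.sqrt 2 * D * Real.sqrt (Q T)) :=
        mul_le_mul_of_nonneg_left hsumkey (by positivity)
    _ = Real.sqrt 2 * D / (T : ℝ) * Real.sqrt (Q T) := hlast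
end

section
/- Let F: ℝ^d → ℝ be differentiable and convex, let X ⊆ ℝ^d be a closed convex set with diameter D = max_{x,y∈X} ‖x−y‖₂, and let x* ∈ X be a minimizer of F over X. Fix a constant step size η > 0 and consider projected gradient descent: starting from x₁ ∈ X, x_{t+1} = Π_X(x_t − η∇F(x_t)). Then the average x̄ = (1/T)Σ_{t=1}^T x_t satisfies F(x̄) − F(x*) ≤ D²/(2ηT) + (η/(2T))·Σ_{t=1}^T ‖∇F(x_t)‖₂². -/
open scoped BigOperators
open InnerProductSpace

lemma grad_ineq {E : Type*} [NormedAddCommGroup E] [InnerProductSpace ℝ E] [CompleteSpace E]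
    {F : E → ℝ} (hF : Differentiable ℝ F) (hconv : ConvexOn ℝ Set.univ F) (a b : E) :
    F a + ⟪gradient F a, b - a⟫_ℝ ≤ F b := by
  set g : ℝ → ℝ := fun s => F (a + s • (b - a)) with hg
  have hgc : ConvexOn ℝ Set.univ g := by
    have := hconv.comp_affineMap (AffineMap.lineMap a b : ℝ →ᵃ[ℝ] E)
    have he : g = (F ∘ (AffineMap.lineMap a b : ℝ →ᵃ[ℝ] E)) := by
      funext s
      simp [g, Function.comp, AffineMap.lineMap_apply]
      rw [add_comm]
    rw [he]
    simpa using this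
  have hc : HasDerivAt (fun s : ℝ => a + s • (b - a)) (b - a) 0 := by
    simpa using ((hasDerivAt_id (0:ℝ)).smul_const (b - a)).const_add a
  have hgd : HasDerivAt g (⟪gradient F a, b - a⟫_ℝ) 0 := by
    have hF' : HasFDerivAt F (toDual ℝ E (gradient F a)) ((fun s : ℝ => a + s • (b - a)) 0) := by
      simpa only [zero_smul, add_zero] using hasGradientAt_iff_hasFDerivAt.mp ((hF a).hasGradientAt : HasGradientAt F (gradient F a) a)
    have h2 := hF'.comp_hasDerivAt (0:ℝ) hc
    rw [toDual_apply_apply] at h2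
    exact h2
  have := hgc.le_slope_of_hasDerivAt (Set.mem_univ 0) (Set.mem_univ 1) one_pos hgd
  simp [slope_def_field, g] at this
  have hi : ⟪gradient F a, b - a⟫_ℝ = (fderiv ℝ F a) b - (fderiv ℝ F a) a := by simp
  linarith

lemma proj_contract {E : Type*} [NormedAddCommGroup E] [InnerProductSpace ℝ E]
    {X : Set E} (hXconv : Convex ℝ X)
    {proj : E → E} (hprojmem : ∀ z, proj z ∈ X)
    (hproj : ∀ z, ∀ y ∈ X, ‖proj z - z‖ ≤ ‖y - z‖)
    (z : E) {y : E} (hy : y ∈ X) : ‖proj z - y‖ ^ 2 ≤ ‖z - y‖ ^ 2 := by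
  haveI : Nonempty X := ⟨⟨proj z, hprojmem z⟩⟩
  have hinf : ‖z - proj z‖ = ⨅ w : X, ‖z - w‖ := by
    refine le_antisymm (le_ciInf fun w => ?_) (ciInf_le ⟨0, fun _ ⟨_, h⟩ => h ▸ norm_nonneg _⟩
      (⟨proj z, hprojmem z⟩ : X))
    rw [norm_sub_rev z, norm_sub_rev z]
    exact hproj z w w.2
  have obtuse : ⟪z - proj z, y - proj z⟫_ℝ ≤ 0 :=
    (norm_eq_iInf_iff_real_inner_le_zero hXconv (hprojmem z)).mp hinf y hy
  have hexp : ‖z - y‖ ^ 2 = ‖z - proj z‖ ^ 2 + 2 * ⟪z - proj z, proj z - y⟫_ℝ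
      + ‖proj z - y‖ ^ 2 := by
    have := norm_add_sq_real (z - proj z) (proj z - y)
    rw [sub_add_sub_cancel] at this
    linarith
  have hflip : ⟪z - proj z, proj z - y⟫_ℝ = -⟪z - proj z, y - proj z⟫_ℝ := by
    rw [← inner_neg_right, neg_sub]
  nlinarith [sq_nonneg ‖z - proj z‖]

/-- Projected gradient descent with a constant step size on a convex function. -/
theorem projected_gd_constant_stepsize_bound {d : ℕ}
    (F : EuclideanSpace ℝ (Fin d) → ℝ)
    (X : Set (EuclideanSpace ℝ (Fin d)))
    (hF : Differentiable ℝ F) (hconv : ConvexOn ℝ Set.univ F)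
    (hXconv : Convex ℝ X) (hXclosed : IsClosed X)
    (D : ℝ) (hD : ∀ x ∈ X, ∀ y ∈ X, ‖x - y‖ ≤ D)
    (xstar : EuclideanSpace ℝ (Fin d)) (hxstar : xstar ∈ X)
    (hmin : ∀ y ∈ X, F xstar ≤ F y)
    (proj : EuclideanSpace ℝ (Fin d) → EuclideanSpace ℝ (Fin d))
    (hprojmem : ∀ z, proj z ∈ X)
    (hproj : ∀ z, ∀ y ∈ X, ‖proj z - z‖ ≤ ‖y - z‖)
    (η : ℝ) (hη : 0 < η)
    (T : ℕ) (hT : 1 ≤ T)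
    (x : ℕ → EuclideanSpace ℝ (Fin d)) (hx1 : x 1 ∈ X)
    (hupdate : ∀ t ∈ Finset.Icc 1 T, x (t + 1) = proj (x t - η • gradient F (x t))) :
    F ((T : ℝ)⁻¹ • ∑ t ∈ Finset.Icc 1 T, x t) - F xstar ≤
      D ^ 2 / (2 * η * T) + η / (2 * T) * ∑ t ∈ Finset.Icc 1 T, ‖gradient F (x t)‖ ^ 2 := by
  have hT0 : (0:ℝ) < T := by exact_mod_cast hT
  set g : ℕ → EuclideanSpace ℝ (Fin d) := fun t => gradient F (x t) with hgdef
  set a : ℕ → ℝ := fun t => ‖x t - xstar‖ ^ 2 with hadef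
  -- per-step inequality
  have key : ∀ t ∈ Finset.Icc 1 T,
      2 * η * (F (x t) - F xstar) ≤ (a t - a (t + 1)) + η ^ 2 * ‖g t‖ ^ 2 := by
    intro t ht
    have h1 : F (x t) - F xstar ≤ ⟪g t, x t - xstar⟫_ℝ := by
      have := grad_ineq hF hconv (x t) xstar
      have hneg : ⟪g t, xstar - x t⟫_ℝ = -⟪g t, x t - xstar⟫_ℝ := by
        rw [← inner_neg_right, neg_sub]
      rw [hneg] at this
      linarith
    have h2 : a (t + 1) ≤ ‖(x t - η • g t) - xstar‖ ^ 2 := by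
      show ‖x (t + 1) - xstar‖ ^ 2 ≤ _
      rw [hupdate t ht]
      exact proj_contract hXconv hprojmem hproj _ hxstar
    have h3 : ‖(x t - η • g t) - xstar‖ ^ 2
        = a t - 2 * η * ⟪g t, x t - xstar⟫_ℝ + η ^ 2 * ‖g t‖ ^ 2 := by
      have he : (x t - η • g t) - xstar = (x t - xstar) - η • g t := by abel
      rw [he, norm_sub_sq_real, real_inner_smul_right, norm_smul]
      have : |η| = η := abs_of_pos hη
      rw [real_inner_comm]
      simp only [Real.norm_eq_abs, this]
      ring
    nlinarith [h1, h2, h3]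
  -- sum the per-step inequalities
  have hsum : 2 * η * (∑ t ∈ Finset.Icc 1 T, (F (x t) - F xstar))
      ≤ (a 1 - a (T + 1)) + η ^ 2 * ∑ t ∈ Finset.Icc 1 T, ‖g t‖ ^ 2 := by
    have h1 := Finset.sum_le_sum key
    have htel : ∑ t ∈ Finset.Icc 1 T, (a t - a (t + 1)) = a 1 - a (T + 1) := by
      rw [← Finset.Ico_add_one_right_eq_Icc, Finset.sum_Ico_eq_sum_range]
      have := Finset.sum_range_sub' (fun i => a (1 + i)) T
      simpa [Nat.add_comm] using this
    rw [Finset.sum_add_distrib, htel] at h1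
    rw [Finset.mul_sum, Finset.mul_sum]
    exact h1
  have ha1 : a 1 ≤ D ^ 2 := by
    show ‖x 1 - xstar‖ ^ 2 ≤ D ^ 2
    have h := hD (x 1) hx1 xstar hxstar
    have := norm_nonneg (x 1 - xstar)
    nlinarith
  have haT : 0 ≤ a (T + 1) := sq_nonneg _
  -- Jensen
  have hjen : F ((T : ℝ)⁻¹ • ∑ t ∈ Finset.Icc 1 T, x t)
      ≤ (T : ℝ)⁻¹ * ∑ t ∈ Finset.Icc 1 T, F (x t) := by
    have hw : (0:ℝ) < ∑ _t ∈ Finset.Icc 1 T, (1:ℝ) := by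
      simp [Nat.card_Icc]
      exact hT
    have := hconv.map_centerMass_le (t := Finset.Icc 1 T) (w := fun _ => (1:ℝ)) (p := x)
      (fun _ _ => zero_le_one) hw (fun i _ => Set.mem_univ _)
    simpa [Finset.centerMass, Nat.card_Icc, smul_eq_mul] using this
  -- combine
  set S : ℝ := ∑ t ∈ Finset.Icc 1 T, (F (x t) - F xstar) with hSdef
  set G : ℝ := ∑ t ∈ Finset.Icc 1 T, ‖g t‖ ^ 2 with hGdef
  have hSsum : S = (∑ t ∈ Finset.Icc 1 T, F (x t)) - T * F xstar := by
    rw [hSdef, Finset.sum_sub_distrib, Finset.sum_const, Nat.card_Icc]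
    simp [nsmul_eq_mul]
  have h2ηS : 2 * η * S ≤ D ^ 2 + η ^ 2 * G := by
    calc 2 * η * S ≤ (a 1 - a (T + 1)) + η ^ 2 * G := hsum
      _ ≤ D ^ 2 + η ^ 2 * G := by linarith
  have hmain : F ((T : ℝ)⁻¹ • ∑ t ∈ Finset.Icc 1 T, x t) - F xstar ≤ (T : ℝ)⁻¹ * S := by
    rw [hSsum]
    have : (T : ℝ)⁻¹ * ((∑ t ∈ Finset.Icc 1 T, F (x t)) - T * F xstar)
        = (T : ℝ)⁻¹ * (∑ t ∈ Finset.Icc 1 T, F (x t)) - F xstar := by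
      field_simp
    rw [this]
    linarith
  refine hmain.trans ?_
  have heq : D ^ 2 / (2 * η * T) + η / (2 * T) * G = (D ^ 2 + η ^ 2 * G) / (2 * η * T) := by
    field_simp
  rw [heq, le_div_iff₀ (by positivity : (0:ℝ) < 2 * η * T)]
  have : (T : ℝ)⁻¹ * S * (2 * η * T) = 2 * η * S := by
    field_simp
  rw [this]
  exact h2ηS
end

section
/- Let F: ℝ^d → ℝ be L-smooth and bounded below by F*. On a probability space with filtration (𝔉_t), consider the per-coordinate SGD update x_{t+1} = x_t − η_t ∘ g_t (coordinate-wise product), where η_t ∈ ℝ^d is 𝔉_{t−1}-measurable with nonnegative entries, and g_t, g'_t are 𝔉_t-measurable with E[g_t | 𝔉_{t−1}] = E[g'_t | 𝔉_{t−1}] = ∇F(x_t), E[g_{t,j} g'_{t,j} | 𝔉_{t−1}] = (∂_j F(x_t))² for each j, and E[(g_{t,j} − ∂_j F(x_t))² | 𝔉_{t−1}] ≤ σ_j². Define ℓ_t(η) = Σ_{j=1}^d (−η_j g_{t,j} g'_{t,j} + (L/2) η_j² g_{t,j}²) and Regret_T(η) = Σ_{t=1}^T (ℓ_t(η_t) −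 ℓ_t(η)). Then for any η ∈ ℝ^d with η_j > 0 for all j: E[Σ_{t=1}^T Σ_{j=1}^d (η_j − (L/2)η_j²)(∂_j F(x_t))²] ≤ F(x₁) − F* + E[Regret_T(η)] + (LT/2)·Σ_{j=1}^d η_j² σ_j². -/
open MeasureTheory
open scoped BigOperators InnerProductSpace


open MeasureTheory
open scoped BigOperators InnerProductSpace

variable {d : ℕ}

lemma norm_sq_eucl (v : EuclideanSpace ℝ (Fin d)) : ‖v‖ ^ 2 = ∑ j, (v j) ^ 2 := by
  rw [EuclideanSpace.norm_eq, Real.sq_sqrt (by positivity)]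
  simp [sq_abs]

lemma coord_sq_le {d : ℕ} (v : EuclideanSpace ℝ (Fin d)) (j : Fin d) :
    (v j) ^ 2 ≤ ‖v‖ ^ 2 := by
  rw [norm_sq_eucl]
  exact Finset.single_le_sum (f := fun i => (v i) ^ 2) (fun i _ => sq_nonneg _)
    (Finset.mem_univ j)

lemma abs_mul_le_sq (a b : ℝ) : |a * b| ≤ a ^ 2 + b ^ 2 := by
  rcases abs_cases (a * b) with ⟨h, _⟩ | ⟨h, _⟩ <;>
    nlinarith [sq_nonneg (a - b), sq_nonneg (a + b)]

lemma inner_eucl (u w : EuclideanSpace ℝ (Fin d)) : ⟪u, w⟫_ℝ = ∑ j, u j * w j := by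
  simp [PiLp.inner_apply, RCLike.inner_apply, mul_comm]

lemma descent (F : EuclideanSpace ℝ (Fin d) → ℝ) (L : ℝ) (hL : 0 ≤ L)
    (hdiff : Differentiable ℝ F)
    (hsmooth : ∀ y z, ‖gradient F y - gradient F z‖ ≤ L * ‖y - z‖)
    (a b : EuclideanSpace ℝ (Fin d)) :
    F b ≤ F a + ⟪gradient F a, b - a⟫_ℝ + L / 2 * ‖b - a‖ ^ 2 := by
  set v := b - a with hv
  have hgc : Continuous (gradient F) := by
    have : LipschitzWith ⟨L, hL⟩ (gradient F) := by
      apply LipschitzWith.of_dist_le_mul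
      intro y z
      have := hsmooth y z; rw [← dist_eq_norm, ← dist_eq_norm] at this; exact this
    exact this.continuous
  have hφ : ∀ s : ℝ, HasDerivAt (fun s : ℝ => F (a + s • v))
      (⟪gradient F (a + s • v), v⟫_ℝ) s := by
    intro s
    have h1 : HasDerivAt (fun s : ℝ => a + s • v) v s := by
      simpa using ((hasDerivAt_id s).smul_const v).const_add a
    have h2 := (hdiff (a + s • v)).hasGradientAt
    have h3 := h2.hasFDerivAt.comp_hasDerivAt s h1
    simpa [Function.comp_def] using h3
  have hcont : Continuous fun s : ℝ => ⟪gradient F (a + s • v), v⟫_ℝ :=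
    (hgc.comp (continuous_const.add (continuous_id.smul continuous_const))).inner continuous_const
  have hftc : ∫ s in (0:ℝ)..1, ⟪gradient F (a + s • v), v⟫_ℝ = F b - F a := by
    rw [intervalIntegral.integral_eq_sub_of_hasDerivAt (fun s _ => hφ s)
      (hcont.intervalIntegrable _ _)]
    simp [hv]
  have hmono : ∫ s in (0:ℝ)..1, ⟪gradient F (a + s • v), v⟫_ℝ ≤
      ∫ s in (0:ℝ)..1, (⟪gradient F a, v⟫_ℝ + L * s * ‖v‖ ^ 2) := by
    apply intervalIntegral.integral_mono_on (by norm_num)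
      (hcont.intervalIntegrable _ _)
      ((by fun_prop : Continuous fun s : ℝ => ⟪gradient F a, v⟫_ℝ + L * s * ‖v‖ ^ 2).intervalIntegrable _ _)
    intro s hs
    have h1 : ⟪gradient F (a + s • v), v⟫_ℝ - ⟪gradient F a, v⟫_ℝ
        = ⟪gradient F (a + s • v) - gradient F a, v⟫_ℝ := by
      rw [inner_sub_left]
    have h2 := real_inner_le_norm (gradient F (a + s • v) - gradient F a) v
    have h3 := hsmooth (a + s • v) a
    have h4 : ‖a + s • v - a‖ = s * ‖v‖ := by
      simp [norm_smul, abs_of_nonneg hs.1]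
    rw [h4] at h3
    have h5 : ‖gradient F (a + s • v) - gradient F a‖ * ‖v‖ ≤ L * s * ‖v‖ * ‖v‖ := by
      apply mul_le_mul_of_nonneg_right _ (norm_nonneg _)
      calc ‖gradient F (a + s • v) - gradient F a‖ ≤ L * (s * ‖v‖) := h3
        _ = L * s * ‖v‖ := by ring
    have h6 : L * s * ‖v‖ * ‖v‖ = L * s * ‖v‖ ^ 2 := by ring
    linarith [h1, h2, h5, h6]
  have hval : ∫ s in (0:ℝ)..1, (⟪gradient F a, v⟫_ℝ + L * s * ‖v‖ ^ 2)
      = ⟪gradient F a, v⟫_ℝ + L / 2 * ‖v‖ ^ 2 := by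
    rw [intervalIntegral.integral_add (intervalIntegrable_const)
      ((by fun_prop : Continuous fun s : ℝ => L * s * ‖v‖ ^ 2).intervalIntegrable _ _)]
    simp only [intervalIntegral.integral_const]
    have : ∫ s in (0:ℝ)..1, L * s * ‖v‖ ^ 2 = L * ‖v‖^2 * ∫ s in (0:ℝ)..1, s := by
      rw [← intervalIntegral.integral_const_mul]
      congr 1; ext s; ring
    rw [this, integral_id]
    norm_num
    ring
  rw [hval] at hmono
  rw [hftc] at hmono
  linarith

open MeasureTheory
open scoped BigOperators InnerProductSpace

lemma int_lin {Ω : Type*} [MeasurableSpace Ω] {μ : MeasureTheory.Measure Ω} (a b : ℝ)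
    {u v : Ω → ℝ} (hu : Integrable u μ) (hv : Integrable v μ) :
    ∫ ω, (a * u ω + b * v ω) ∂μ = a * ∫ ω, u ω ∂μ + b * ∫ ω, v ω ∂μ := by
  rw [integral_add (hu.const_mul a) (hv.const_mul b), integral_const_mul, integral_const_mul]

lemma tele (S r : ℕ → ℝ) :
    ∀ N : ℕ, (∀ t ∈ Finset.Icc 1 N, S (t + 1) ≤ S t + r t) →
      S (N + 1) ≤ S 1 + ∑ t ∈ Finset.Icc 1 N, r t := by
  intro N
  induction N with
  | zero => simp
  | succ n ih =>
    intro h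
    rw [Finset.sum_Icc_succ_top (by omega : 1 ≤ n + 1)]
    have h1 := h (n + 1) (by simp)
    have h2 := ih (fun t ht => h t (Finset.mem_Icc.mpr
      ⟨(Finset.mem_Icc.mp ht).1, le_trans (Finset.mem_Icc.mp ht).2 (by omega)⟩))
    linarith

lemma pull {Ω : Type*} {m : MeasurableSpace Ω} [m0 : MeasurableSpace Ω] (μ : Measure Ω)
    [IsProbabilityMeasure μ] (hm : m ≤ m0)
    {c h φ : Ω → ℝ} (hc : StronglyMeasurable[m] c) (hh : Integrable h μ)
    (hch : Integrable (fun ω => c ω * h ω) μ) (hφ : μ[h|m] =ᵐ[μ] φ) :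
    ∫ ω, c ω * h ω ∂μ = ∫ ω, c ω * φ ω ∂μ := by
  have h1 : μ[fun ω => c ω * h ω|m] =ᵐ[μ] fun ω => c ω * φ ω := by
    refine (condExp_mul_of_stronglyMeasurable_left hc hch hh).trans ?_
    filter_upwards [hφ] with ω hω
    simp [hω]
  calc ∫ ω, c ω * h ω ∂μ = ∫ ω, (μ[fun ω => c ω * h ω|m]) ω ∂μ :=
        (integral_condExp hm).symm
    _ = ∫ ω, c ω * φ ω ∂μ := integral_congr_ae h1

lemma coord_condexp {d : ℕ} {Ω : Type*} {m : MeasurableSpace Ω} [m0 : MeasurableSpace Ω]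
    (μ : Measure Ω) [IsProbabilityMeasure μ] (hm : m ≤ m0)
    {f : Ω → EuclideanSpace ℝ (Fin d)} {φ : Ω → EuclideanSpace ℝ (Fin d)}
    (hf : Integrable f μ) (hφm : StronglyMeasurable[m] φ)
    (hφi : Integrable φ μ) (hcond : μ[f|m] =ᵐ[μ] φ) (j : Fin d) :
    μ[fun ω => f ω j|m] =ᵐ[μ] fun ω => φ ω j := by
  have hfj : Integrable (fun ω => f ω j) μ := by
    have := (EuclideanSpace.proj j : EuclideanSpace ℝ (Fin d) →L[ℝ] ℝ).integrable_comp hf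
    simpa [PiLp.proj_apply] using this
  have hφj : Integrable (fun ω => φ ω j) μ := by
    have := (EuclideanSpace.proj j : EuclideanSpace ℝ (Fin d) →L[ℝ] ℝ).integrable_comp hφi
    simpa [PiLp.proj_apply] using this
  refine (ae_eq_condExp_of_forall_setIntegral_eq hm hfj (fun s _ _ => hφj.integrableOn)
    (fun s hs _ => ?_) (StronglyMeasurable.aestronglyMeasurable
      ((EuclideanSpace.proj j :
        EuclideanSpace ℝ (Fin d) →L[ℝ] ℝ).continuous.comp_stronglyMeasurable hφm))).symm
  have hv : ∫ ω in s, φ ω ∂μ = ∫ ω in s, f ω ∂μ := by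
    rw [← setIntegral_condExp hm hf hs]
    exact setIntegral_congr_ae (hm s hs) (hcond.mono fun ω hω _ => hω.symm)
  have h1 := (EuclideanSpace.proj j :
    EuclideanSpace ℝ (Fin d) →L[ℝ] ℝ).integral_comp_comm (hφi.restrict (s := s))
  have h2 := (EuclideanSpace.proj j :
    EuclideanSpace ℝ (Fin d) →L[ℝ] ℝ).integral_comp_comm (hf.restrict (s := s))
  simp only [PiLp.proj_apply] at h1 h2
  rw [h1, h2, hv]


/-- Per-coordinate SGDOL master inequality. -/
theorem sgdol_per_coordinate_master_inequality {d : ℕ}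
    {Ω : Type*} [m0 : MeasurableSpace Ω]
    (μ : Measure Ω) [IsProbabilityMeasure μ] (ℱ : Filtration ℕ m0)
    (F : EuclideanSpace ℝ (Fin d) → ℝ) (L Fstar : ℝ) (σ : Fin d → ℝ)
    (hdiff : Differentiable ℝ F)
    (hsmooth : ∀ y z, ‖gradient F y - gradient F z‖ ≤ L * ‖y - z‖)
    (hbdd : ∀ y, Fstar ≤ F y)
    (T : ℕ) (hT : 1 ≤ T)
    (x g g' : ℕ → Ω → EuclideanSpace ℝ (Fin d)) (η : ℕ → Ω → Fin d → ℝ)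
    (x1 : EuclideanSpace ℝ (Fin d)) (hx1 : ∀ ω, x 1 ω = x1)
    (hxmeas : ∀ t ∈ Finset.Icc 1 T, StronglyMeasurable[ℱ (t - 1)] (x t))
    (hηmeas : ∀ t ∈ Finset.Icc 1 T, StronglyMeasurable[ℱ (t - 1)] (η t))
    (hηnonneg : ∀ t ω j, 0 ≤ η t ω j)
    (hgmeas : ∀ t ∈ Finset.Icc 1 T, StronglyMeasurable[ℱ t] (g t))
    (hg'meas : ∀ t ∈ Finset.Icc 1 T, StronglyMeasurable[ℱ t] (g' t))
    (hunb : ∀ t ∈ Finset.Icc 1 T,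
      μ[g t | ℱ (t - 1)] =ᵐ[μ] fun ω => gradient F (x t ω))
    (hunb' : ∀ t ∈ Finset.Icc 1 T,
      μ[g' t | ℱ (t - 1)] =ᵐ[μ] fun ω => gradient F (x t ω))
    (hindep : ∀ t ∈ Finset.Icc 1 T, ∀ j,
      μ[(fun ω => g t ω j * g' t ω j) | ℱ (t - 1)]
        =ᵐ[μ] fun ω => (gradient F (x t ω) j) ^ 2)
    (hvar : ∀ t ∈ Finset.Icc 1 T, ∀ j,
      μ[(fun ω => (g t ω j - gradient F (x t ω) j) ^ 2) | ℱ (t - 1)]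
        ≤ᵐ[μ] fun _ => (σ j) ^ 2)
    (hupdate : ∀ t ∈ Finset.Icc 1 T, ∀ ω, ∀ j,
      x (t + 1) ω j = x t ω j - η t ω j * g t ω j)
    (hintF : ∀ t ∈ Finset.Icc 1 (T + 1), Integrable (fun ω => F (x t ω)) μ)
    (hint1 : ∀ t ∈ Finset.Icc 1 T, ∀ j, Integrable (fun ω => g t ω j * g' t ω j) μ)
    (hint2 : ∀ t ∈ Finset.Icc 1 T, ∀ j, Integrable (fun ω => (g t ω j) ^ 2) μ)
    (hint3 : ∀ t ∈ Finset.Icc 1 T, ∀ j,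
      Integrable (fun ω => η t ω j * (g t ω j * g' t ω j)) μ)
    (hint4 : ∀ t ∈ Finset.Icc 1 T, ∀ j,
      Integrable (fun ω => (η t ω j) ^ 2 * (g t ω j) ^ 2) μ)
    (hint5 : ∀ t ∈ Finset.Icc 1 T, Integrable (fun ω => ‖gradient F (x t ω)‖ ^ 2) μ)
    (ηb : Fin d → ℝ) (hηb : ∀ j, 0 < ηb j) :
    (∫ ω, ∑ t ∈ Finset.Icc 1 T, ∑ j,
        (ηb j - L / 2 * (ηb j) ^ 2) * (gradient F (x t ω) j) ^ 2 ∂μ) ≤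
      F x1 - Fstar
      + (∫ ω, ∑ t ∈ Finset.Icc 1 T,
          ((∑ j, (-(η t ω j) * (g t ω j * g' t ω j)
              + L / 2 * (η t ω j) ^ 2 * (g t ω j) ^ 2))
            - (∑ j, (-(ηb j) * (g t ω j * g' t ω j)
              + L / 2 * (ηb j) ^ 2 * (g t ω j) ^ 2))) ∂μ)
      + L * T / 2 * ∑ j, (ηb j) ^ 2 * (σ j) ^ 2 := by
  classical
  -- trivial case d = 0
  rcases Nat.eq_zero_or_pos d with hd | hd
  · subst hd
    simp only [Finset.univ_eq_empty, Finset.sum_empty, Finset.sum_const_zero, sub_self,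
      integral_zero, mul_zero, add_zero]
    have := hbdd x1
    linarith
  -- L is nonnegative
  have hL : 0 ≤ L := by
    have h := hsmooth (EuclideanSpace.single ⟨0, hd⟩ (1 : ℝ)) 0
    rw [sub_zero, EuclideanSpace.norm_single, norm_one, mul_one] at h
    exact le_trans (norm_nonneg _) h
  have hgc : Continuous (gradient F) := by
    have : LipschitzWith ⟨L, hL⟩ (gradient F) := by
      apply LipschitzWith.of_dist_le_mul
      intro y z
      have := hsmooth y z; rw [← dist_eq_norm, ← dist_eq_norm] at this; exact this
    exact this.continuous
  -- membership helpers
  have hmem : ∀ t ∈ Finset.Icc 1 T, t ∈ Finset.Icc 1 (T + 1) := by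
    intro t ht; simp only [Finset.mem_Icc] at ht ⊢; omega
  have hmem' : ∀ t ∈ Finset.Icc 1 T, t + 1 ∈ Finset.Icc 1 (T + 1) := by
    intro t ht; simp only [Finset.mem_Icc] at ht ⊢; omega
  -- measurability of gradient coordinates
  have hDvm : ∀ t ∈ Finset.Icc 1 T,
      StronglyMeasurable[ℱ (t - 1)] (fun ω => gradient F (x t ω)) := fun t ht =>
    hgc.comp_stronglyMeasurable (hxmeas t ht)
  have hDm : ∀ t ∈ Finset.Icc 1 T, ∀ j,
      StronglyMeasurable[ℱ (t - 1)] (fun ω => gradient F (x t ω) j) := by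
    intro t ht j
    have := ((EuclideanSpace.proj j :
      EuclideanSpace ℝ (Fin d) →L[ℝ] ℝ).continuous.comp hgc).comp_stronglyMeasurable
      (hxmeas t ht)
    simpa [PiLp.proj_apply] using this
  have hηjm : ∀ t ∈ Finset.Icc 1 T, ∀ j,
      StronglyMeasurable[ℱ (t - 1)] (fun ω => η t ω j) := fun t ht j =>
    (continuous_apply j).comp_stronglyMeasurable (hηmeas t ht)
  have hgjm : ∀ t ∈ Finset.Icc 1 T, ∀ j,
      AEStronglyMeasurable (fun ω => g t ω j) μ := by
    intro t ht j
    have := ((EuclideanSpace.proj j :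
      EuclideanSpace ℝ (Fin d) →L[ℝ] ℝ).continuous.comp_stronglyMeasurable
      ((hgmeas t ht).mono (ℱ.le t)))
    simpa [PiLp.proj_apply] using this.aestronglyMeasurable
  -- integrabilities
  have intD2 : ∀ t ∈ Finset.Icc 1 T, ∀ j,
      Integrable (fun ω => (gradient F (x t ω) j) ^ 2) μ := by
    intro t ht j
    refine (hint5 t ht).mono' ?_ (Filter.Eventually.of_forall fun ω => ?_)
    · exact ((((hDm t ht j).mono (ℱ.le _)).mul ((hDm t ht j).mono (ℱ.le _))).aestronglyMeasurable).congr
        (Filter.Eventually.of_forall fun ω => (pow_two (gradient F (x t ω) j)).symm)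
    · rw [Real.norm_eq_abs, abs_of_nonneg (sq_nonneg _)]
      exact coord_sq_le _ _
  have intDg : ∀ t ∈ Finset.Icc 1 T, ∀ j,
      Integrable (fun ω => gradient F (x t ω) j * g t ω j) μ := by
    intro t ht j
    refine ((hint5 t ht).add (hint2 t ht j)).mono'
      ((((hDm t ht j).mono (ℱ.le _)).aestronglyMeasurable).mul (hgjm t ht j))
      (Filter.Eventually.of_forall fun ω => ?_)
    rw [Real.norm_eq_abs]
    exact le_trans (abs_mul_le_sq _ _) (add_le_add_left (coord_sq_le _ _) _)
  have intηDg : ∀ t ∈ Finset.Icc 1 T, ∀ j,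
      Integrable (fun ω => (η t ω j * gradient F (x t ω) j) * g t ω j) μ := by
    intro t ht j
    refine ((hint5 t ht).add (hint4 t ht j)).mono'
      (((((hηjm t ht j).mul (hDm t ht j)).mono (ℱ.le _)).aestronglyMeasurable).mul
        (hgjm t ht j)) (Filter.Eventually.of_forall fun ω => ?_)
    rw [Real.norm_eq_abs]
    have h1 : |η t ω j * gradient F (x t ω) j * g t ω j|
        = |gradient F (x t ω) j * (η t ω j * g t ω j)| := by ring_nf
    rw [h1]
    refine le_trans (abs_mul_le_sq _ _) (add_le_add (coord_sq_le _ _) (le_of_eq (by ring)))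
  have intgv : ∀ t ∈ Finset.Icc 1 T, Integrable (g t) μ := by
    intro t ht
    have hb : Integrable (fun ω => (1 + ∑ j, (g t ω j) ^ 2) / 2) μ := by
      have := ((integrable_const (1 : ℝ)).add
        (integrable_finset_sum Finset.univ
          (fun j (_ : j ∈ Finset.univ) => hint2 t ht j))).div_const 2
      exact this.congr (Filter.Eventually.of_forall fun ω => by simp)
    refine hb.mono' ((hgmeas t ht).mono (ℱ.le t)).aestronglyMeasurable
      (Filter.Eventually.of_forall fun ω => ?_)
    have h := norm_sq_eucl (g t ω)
    nlinarith [sq_nonneg (‖g t ω‖ - 1), norm_nonneg (g t ω)]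
  have intDv : ∀ t ∈ Finset.Icc 1 T, Integrable (fun ω => gradient F (x t ω)) μ := by
    intro t ht
    have hb : Integrable (fun ω => (1 + ‖gradient F (x t ω)‖ ^ 2) / 2) μ := by
      have := ((integrable_const (1 : ℝ)).add (hint5 t ht)).div_const 2
      exact this.congr (Filter.Eventually.of_forall fun ω => by simp)
    refine hb.mono' ((hDvm t ht).mono (ℱ.le _)).aestronglyMeasurable
      (Filter.Eventually.of_forall fun ω => ?_)
    nlinarith [sq_nonneg (‖gradient F (x t ω)‖ - 1), norm_nonneg (gradient F (x t ω))]
  have intgj : ∀ t ∈ Finset.Icc 1 T, ∀ j, Integrable (fun ω => g t ω j) μ := by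
    intro t ht j
    have := (EuclideanSpace.proj j :
      EuclideanSpace ℝ (Fin d) →L[ℝ] ℝ).integrable_comp (intgv t ht)
    simpa [PiLp.proj_apply] using this
  -- conditional expectation of coordinates of g
  have A2 : ∀ t ∈ Finset.Icc 1 T, ∀ j,
      μ[fun ω => g t ω j|ℱ (t - 1)] =ᵐ[μ] fun ω => gradient F (x t ω) j :=
    fun t ht j => coord_condexp μ (ℱ.le (t - 1)) (intgv t ht) (hDvm t ht) (intDv t ht)
      (hunb t ht) j
  -- key integral identities
  have E1 : ∀ t ∈ Finset.Icc 1 T, ∀ j,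
      ∫ ω, η t ω j * (g t ω j * g' t ω j) ∂μ
        = ∫ ω, η t ω j * (gradient F (x t ω) j) ^ 2 ∂μ :=
    fun t ht j => pull μ (ℱ.le (t - 1)) (hηjm t ht j) (hint1 t ht j) (hint3 t ht j)
      (hindep t ht j)
  have E2 : ∀ t ∈ Finset.Icc 1 T, ∀ j,
      ∫ ω, (η t ω j * gradient F (x t ω) j) * g t ω j ∂μ
        = ∫ ω, (η t ω j * gradient F (x t ω) j) * gradient F (x t ω) j ∂μ :=
    fun t ht j => pull μ (ℱ.le (t - 1)) ((hηjm t ht j).mul (hDm t ht j)) (intgj t ht j)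
      (intηDg t ht j) (A2 t ht j)
  have E3 : ∀ t ∈ Finset.Icc 1 T, ∀ j,
      ∫ ω, g t ω j * g' t ω j ∂μ = ∫ ω, (gradient F (x t ω) j) ^ 2 ∂μ := by
    intro t ht j
    rw [← integral_condExp (ℱ.le (t - 1)) (f := fun ω => g t ω j * g' t ω j)]
    exact integral_congr_ae (hindep t ht j)
  have E4 : ∀ t ∈ Finset.Icc 1 T, ∀ j,
      ∫ ω, gradient F (x t ω) j * g t ω j ∂μ = ∫ ω, (gradient F (x t ω) j) ^ 2 ∂μ := by
    intro t ht j
    have := pull μ (ℱ.le (t - 1)) (hDm t ht j) (intgj t ht j) (intDg t ht j) (A2 t ht j)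
    rw [this]
    exact integral_congr_ae (Filter.Eventually.of_forall fun ω => (pow_two _).symm)
  have E5 : ∀ t ∈ Finset.Icc 1 T, ∀ j,
      ∫ ω, (g t ω j - gradient F (x t ω) j) ^ 2 ∂μ ≤ (σ j) ^ 2 := by
    intro t ht j
    rw [← integral_condExp (ℱ.le (t - 1))
      (f := fun ω => (g t ω j - gradient F (x t ω) j) ^ 2)]
    calc ∫ ω, (μ[fun ω => (g t ω j - gradient F (x t ω) j) ^ 2|ℱ (t - 1)]) ω ∂μ
        ≤ ∫ _, (σ j) ^ 2 ∂μ :=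
          integral_mono_ae integrable_condExp (integrable_const _) (hvar t ht j)
      _ = (σ j) ^ 2 := by simp
  have intsub : ∀ t ∈ Finset.Icc 1 T, ∀ j,
      Integrable (fun ω => (g t ω j - gradient F (x t ω) j) ^ 2) μ := by
    intro t ht j
    have := ((hint2 t ht j).sub ((intDg t ht j).const_mul 2)).add (intD2 t ht j)
    exact this.congr (Filter.Eventually.of_forall fun ω => by
      simp only [Pi.add_apply, Pi.sub_apply]; ring)
  have E6 : ∀ t ∈ Finset.Icc 1 T, ∀ j,
      ∫ ω, (g t ω j) ^ 2 ∂μ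
        ≤ (σ j) ^ 2 + ∫ ω, (gradient F (x t ω) j) ^ 2 ∂μ := by
    intro t ht j
    have A1 : Integrable (fun ω => (g t ω j) ^ 2
        - 2 * (gradient F (x t ω) j * g t ω j)) μ :=
      (hint2 t ht j).sub ((intDg t ht j).const_mul 2)
    have e1 : ∫ ω, (g t ω j - gradient F (x t ω) j) ^ 2 ∂μ
        = ∫ ω, ((g t ω j) ^ 2 - 2 * (gradient F (x t ω) j * g t ω j)
            + (gradient F (x t ω) j) ^ 2) ∂μ :=
      integral_congr_ae (Filter.Eventually.of_forall fun ω => by ring)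
    have e2 : ∫ ω, ((g t ω j) ^ 2 - 2 * (gradient F (x t ω) j * g t ω j)
          + (gradient F (x t ω) j) ^ 2) ∂μ
        = ∫ ω, ((g t ω j) ^ 2 - 2 * (gradient F (x t ω) j * g t ω j)) ∂μ
          + ∫ ω, (gradient F (x t ω) j) ^ 2 ∂μ :=
      integral_add A1 (intD2 t ht j)
    have e3 : ∫ ω, ((g t ω j) ^ 2 - 2 * (gradient F (x t ω) j * g t ω j)) ∂μ
        = ∫ ω, (g t ω j) ^ 2 ∂μ - ∫ ω, 2 * (gradient F (x t ω) j * g t ω j) ∂μ :=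
      integral_sub (hint2 t ht j) ((intDg t ht j).const_mul 2)
    have e4 : ∫ ω, 2 * (gradient F (x t ω) j * g t ω j) ∂μ
        = 2 * ∫ ω, gradient F (x t ω) j * g t ω j ∂μ :=
      integral_const_mul 2 _
    have hexp : ∫ ω, (g t ω j - gradient F (x t ω) j) ^ 2 ∂μ
        = ∫ ω, (g t ω j) ^ 2 ∂μ - 2 * ∫ ω, gradient F (x t ω) j * g t ω j ∂μ
          + ∫ ω, (gradient F (x t ω) j) ^ 2 ∂μ := by
      rw [e1, e2, e3, e4]
    have h5 := E5 t ht j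
    have h4 := E4 t ht j
    rw [hexp, h4] at h5
    linarith
  -- integrability of the loss summands
  have intlη : ∀ t ∈ Finset.Icc 1 T, ∀ j, Integrable (fun ω =>
      -(η t ω j) * (g t ω j * g' t ω j)
        + L / 2 * (η t ω j) ^ 2 * (g t ω j) ^ 2) μ := by
    intro t ht j
    refine (((hint3 t ht j).neg).add ((hint4 t ht j).const_mul (L / 2))).congr
      (Filter.Eventually.of_forall fun ω => ?_)
    simp only [Pi.add_apply, Pi.neg_apply]
    ring
  have intlb : ∀ t ∈ Finset.Icc 1 T, ∀ j, Integrable (fun ω =>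
      -(ηb j) * (g t ω j * g' t ω j)
        + L / 2 * (ηb j) ^ 2 * (g t ω j) ^ 2) μ := by
    intro t ht j
    refine (((hint1 t ht j).const_mul (-(ηb j))).add
      ((hint2 t ht j).const_mul (L / 2 * (ηb j) ^ 2))).congr
      (Filter.Eventually.of_forall fun ω => ?_)
    simp only [Pi.add_apply]
    try ring
  -- split of the loss integrals
  have hRt : ∀ t ∈ Finset.Icc 1 T,
      ∫ ω, (∑ j, (-(η t ω j) * (g t ω j * g' t ω j)
          + L / 2 * (η t ω j) ^ 2 * (g t ω j) ^ 2)) ∂μ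
        = ∑ j, (-(∫ ω, η t ω j * (g t ω j * g' t ω j) ∂μ)
          + L / 2 * ∫ ω, (η t ω j) ^ 2 * (g t ω j) ^ 2 ∂μ) := by
    intro t ht
    rw [integral_finset_sum _ fun j _ => intlη t ht j]
    refine Finset.sum_congr rfl fun j _ => ?_
    calc ∫ ω, (-(η t ω j) * (g t ω j * g' t ω j)
            + L / 2 * (η t ω j) ^ 2 * (g t ω j) ^ 2) ∂μ
        = ∫ ω, ((-1 : ℝ) * (η t ω j * (g t ω j * g' t ω j))
            + (L / 2) * ((η t ω j) ^ 2 * (g t ω j) ^ 2)) ∂μ :=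
          integral_congr_ae (Filter.Eventually.of_forall fun ω => by ring)
      _ = (-1 : ℝ) * (∫ ω, η t ω j * (g t ω j * g' t ω j) ∂μ)
            + (L / 2) * ∫ ω, (η t ω j) ^ 2 * (g t ω j) ^ 2 ∂μ :=
          int_lin (-1) (L / 2) (hint3 t ht j) (hint4 t ht j)
      _ = -(∫ ω, η t ω j * (g t ω j * g' t ω j) ∂μ)
            + L / 2 * ∫ ω, (η t ω j) ^ 2 * (g t ω j) ^ 2 ∂μ := by ring
  have hBt : ∀ t ∈ Finset.Icc 1 T,
      ∫ ω, (∑ j, (-(ηb j) * (g t ω j * g' t ω j)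
          + L / 2 * (ηb j) ^ 2 * (g t ω j) ^ 2)) ∂μ
        = ∑ j, ((-(ηb j)) * (∫ ω, g t ω j * g' t ω j ∂μ)
          + (L / 2 * (ηb j) ^ 2) * ∫ ω, (g t ω j) ^ 2 ∂μ) := by
    intro t ht
    rw [integral_finset_sum _ fun j _ => intlb t ht j]
    refine Finset.sum_congr rfl fun j _ => ?_
    calc ∫ ω, (-(ηb j) * (g t ω j * g' t ω j)
            + L / 2 * (ηb j) ^ 2 * (g t ω j) ^ 2) ∂μ
        = ∫ ω, ((-(ηb j)) * (g t ω j * g' t ω j)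
            + (L / 2 * (ηb j) ^ 2) * ((g t ω j) ^ 2)) ∂μ :=
          integral_congr_ae (Filter.Eventually.of_forall fun ω => by ring)
      _ = (-(ηb j)) * (∫ ω, g t ω j * g' t ω j ∂μ)
            + (L / 2 * (ηb j) ^ 2) * ∫ ω, (g t ω j) ^ 2 ∂μ :=
          int_lin _ _ (hint1 t ht j) (hint2 t ht j)
  -- step inequality
  have K1 : ∀ t ∈ Finset.Icc 1 T,
      (∫ ω, F (x (t + 1) ω) ∂μ) ≤ (∫ ω, F (x t ω) ∂μ)
        + ∫ ω, (∑ j, (-(η t ω j) * (g t ω j * g' t ω j)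
            + L / 2 * (η t ω j) ^ 2 * (g t ω j) ^ 2)) ∂μ := by
    intro t ht
    have hpt : ∀ ω, F (x (t + 1) ω) ≤ F (x t ω)
        + ∑ j, (-((η t ω j * gradient F (x t ω) j) * g t ω j)
          + L / 2 * ((η t ω j) ^ 2 * (g t ω j) ^ 2)) := by
      intro ω
      have hdes := descent F L hL hdiff hsmooth (x t ω) (x (t + 1) ω)
      rw [inner_eucl, norm_sq_eucl] at hdes
      have hsub : ∀ j, (x (t + 1) ω - x t ω) j = -(η t ω j * g t ω j) := by
        intro j
        have h := hupdate t ht ω j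
        have : (x (t + 1) ω - x t ω) j = x (t + 1) ω j - x t ω j := rfl
        rw [this, h]
        ring
      have heq : F (x t ω) + ∑ j, gradient F (x t ω) j * (x (t + 1) ω - x t ω) j
            + L / 2 * ∑ j, ((x (t + 1) ω - x t ω) j) ^ 2
          = F (x t ω) + ∑ j, (-((η t ω j * gradient F (x t ω) j) * g t ω j)
            + L / 2 * ((η t ω j) ^ 2 * (g t ω j) ^ 2)) := by
        rw [Finset.mul_sum, add_assoc, ← Finset.sum_add_distrib]
        congr 1
        exact Finset.sum_congr rfl fun j _ => by rw [hsub j]; ring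
      linarith [hdes, heq]
    have intmid : ∀ j, Integrable (fun ω =>
        -((η t ω j * gradient F (x t ω) j) * g t ω j)
          + L / 2 * ((η t ω j) ^ 2 * (g t ω j) ^ 2)) μ := by
      intro j
      refine ((intηDg t ht j).neg.add ((hint4 t ht j).const_mul (L / 2))).congr
        (Filter.Eventually.of_forall fun ω => ?_)
      simp only [Pi.add_apply, Pi.neg_apply]
      try ring
    have intP : Integrable (fun ω => F (x t ω)
        + ∑ j, (-((η t ω j * gradient F (x t ω) j) * g t ω j)
          + L / 2 * ((η t ω j) ^ 2 * (g t ω j) ^ 2))) μ :=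
      (hintF t (hmem t ht)).add (integrable_finset_sum _ fun j _ => intmid j)
    have h1 : (∫ ω, F (x (t + 1) ω) ∂μ) ≤ ∫ ω, (F (x t ω)
        + ∑ j, (-((η t ω j * gradient F (x t ω) j) * g t ω j)
          + L / 2 * ((η t ω j) ^ 2 * (g t ω j) ^ 2))) ∂μ :=
      integral_mono (hintF (t + 1) (hmem' t ht)) intP hpt
    have h2 : ∫ ω, (F (x t ω)
          + ∑ j, (-((η t ω j * gradient F (x t ω) j) * g t ω j)
            + L / 2 * ((η t ω j) ^ 2 * (g t ω j) ^ 2))) ∂μ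
        = (∫ ω, F (x t ω) ∂μ) + ∑ j, ∫ ω,
            (-((η t ω j * gradient F (x t ω) j) * g t ω j)
              + L / 2 * ((η t ω j) ^ 2 * (g t ω j) ^ 2)) ∂μ := by
      rw [integral_add (hintF t (hmem t ht)) (integrable_finset_sum _ fun j _ => intmid j),
        integral_finset_sum _ fun j _ => intmid j]
    have h3 : ∀ j, ∫ ω, (-((η t ω j * gradient F (x t ω) j) * g t ω j)
          + L / 2 * ((η t ω j) ^ 2 * (g t ω j) ^ 2)) ∂μ
        = -(∫ ω, η t ω j * (g t ω j * g' t ω j) ∂μ)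
          + L / 2 * ∫ ω, (η t ω j) ^ 2 * (g t ω j) ^ 2 ∂μ := by
      intro j
      have c1 : ∫ ω, (-((η t ω j * gradient F (x t ω) j) * g t ω j)
            + L / 2 * ((η t ω j) ^ 2 * (g t ω j) ^ 2)) ∂μ
          = (-1 : ℝ) * (∫ ω, (η t ω j * gradient F (x t ω) j) * g t ω j ∂μ)
            + (L / 2) * ∫ ω, (η t ω j) ^ 2 * (g t ω j) ^ 2 ∂μ := by
        rw [← int_lin (-1) (L / 2) (intηDg t ht j) (hint4 t ht j)]
        exact integral_congr_ae (Filter.Eventually.of_forall fun ω => by ring)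
      have c2 : ∫ ω, (η t ω j * gradient F (x t ω) j) * gradient F (x t ω) j ∂μ
          = ∫ ω, η t ω j * (gradient F (x t ω) j) ^ 2 ∂μ :=
        integral_congr_ae (Filter.Eventually.of_forall fun ω => by ring)
      rw [c1, E2 t ht j, c2, ← E1 t ht j]
      ring
    calc (∫ ω, F (x (t + 1) ω) ∂μ) ≤ _ := h1
      _ = (∫ ω, F (x t ω) ∂μ) + ∑ j, ∫ ω,
            (-((η t ω j * gradient F (x t ω) j) * g t ω j)
              + L / 2 * ((η t ω j) ^ 2 * (g t ω j) ^ 2)) ∂μ := h2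
      _ = (∫ ω, F (x t ω) ∂μ) + ∑ j, (-(∫ ω, η t ω j * (g t ω j * g' t ω j) ∂μ)
            + L / 2 * ∫ ω, (η t ω j) ^ 2 * (g t ω j) ^ 2 ∂μ) := by
          rw [Finset.sum_congr rfl fun j _ => h3 j]
      _ = (∫ ω, F (x t ω) ∂μ) + ∫ ω, (∑ j, (-(η t ω j) * (g t ω j * g' t ω j)
            + L / 2 * (η t ω j) ^ 2 * (g t ω j) ^ 2)) ∂μ := by rw [hRt t ht]
  -- per-step lower bound via the comparator
  have K2 : ∀ t ∈ Finset.Icc 1 T,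
      ∑ j, (ηb j - L / 2 * (ηb j) ^ 2) * (∫ ω, (gradient F (x t ω) j) ^ 2 ∂μ)
        ≤ -(∫ ω, (∑ j, (-(ηb j) * (g t ω j * g' t ω j)
            + L / 2 * (ηb j) ^ 2 * (g t ω j) ^ 2)) ∂μ)
          + L / 2 * ∑ j, (ηb j) ^ 2 * (σ j) ^ 2 := by
    intro t ht
    rw [hBt t ht, ← Finset.sum_neg_distrib, Finset.mul_sum, ← Finset.sum_add_distrib]
    refine Finset.sum_le_sum fun j _ => ?_
    have h3 := E3 t ht j
    have h6 := E6 t ht j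
    have hcoef : (0 : ℝ) ≤ L / 2 * (ηb j) ^ 2 := by positivity
    have hmul := mul_le_mul_of_nonneg_left h6 hcoef
    rw [mul_add] at hmul
    have h3m : ηb j * ∫ ω, g t ω j * g' t ω j ∂μ
        = ηb j * ∫ ω, (gradient F (x t ω) j) ^ 2 ∂μ := by rw [h3]
    nlinarith [hmul, h3m]
  -- telescoping
  have htel : ∫ ω, F (x (T + 1) ω) ∂μ ≤ (∫ ω, F (x 1 ω) ∂μ)
      + ∑ t ∈ Finset.Icc 1 T, ∫ ω, (∑ j, (-(η t ω j) * (g t ω j * g' t ω j)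
        + L / 2 * (η t ω j) ^ 2 * (g t ω j) ^ 2)) ∂μ :=
    tele (fun t => ∫ ω, F (x t ω) ∂μ)
      (fun t => ∫ ω, (∑ j, (-(η t ω j) * (g t ω j * g' t ω j)
        + L / 2 * (η t ω j) ^ 2 * (g t ω j) ^ 2)) ∂μ) T K1
  have hS1 : ∫ ω, F (x 1 ω) ∂μ = F x1 := by
    rw [show (fun ω => F (x 1 ω)) = fun _ => F x1 from funext fun ω => by rw [hx1]]
    simp
  have hFstar : Fstar ≤ ∫ ω, F (x (T + 1) ω) ∂μ := by
    have h := integral_mono (integrable_const Fstar)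
      (hintF (T + 1) (by simp [Finset.mem_Icc])) (fun ω => hbdd _)
    simpa using h
  -- rewrite the goal
  have hLHS : ∫ ω, (∑ t ∈ Finset.Icc 1 T, ∑ j,
        (ηb j - L / 2 * (ηb j) ^ 2) * (gradient F (x t ω) j) ^ 2) ∂μ
      = ∑ t ∈ Finset.Icc 1 T, ∑ j,
        (ηb j - L / 2 * (ηb j) ^ 2) * ∫ ω, (gradient F (x t ω) j) ^ 2 ∂μ := by
    rw [integral_finset_sum _ fun t htt =>
      integrable_finset_sum _ fun j _ => (intD2 t htt j).const_mul _]
    refine Finset.sum_congr rfl fun t htt => ?_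
    rw [integral_finset_sum _ fun j _ => (intD2 t htt j).const_mul _]
    exact Finset.sum_congr rfl fun j _ => integral_const_mul _ _
  have hREG : ∫ ω, (∑ t ∈ Finset.Icc 1 T,
        ((∑ j, (-(η t ω j) * (g t ω j * g' t ω j)
            + L / 2 * (η t ω j) ^ 2 * (g t ω j) ^ 2))
          - (∑ j, (-(ηb j) * (g t ω j * g' t ω j)
            + L / 2 * (ηb j) ^ 2 * (g t ω j) ^ 2)))) ∂μ
      = ∑ t ∈ Finset.Icc 1 T,
          ((∫ ω, (∑ j, (-(η t ω j) * (g t ω j * g' t ω j)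
              + L / 2 * (η t ω j) ^ 2 * (g t ω j) ^ 2)) ∂μ)
            - ∫ ω, (∑ j, (-(ηb j) * (g t ω j * g' t ω j)
              + L / 2 * (ηb j) ^ 2 * (g t ω j) ^ 2)) ∂μ) := by
    have intA : ∀ t ∈ Finset.Icc 1 T, Integrable (fun ω =>
        ∑ j, (-(η t ω j) * (g t ω j * g' t ω j)
          + L / 2 * (η t ω j) ^ 2 * (g t ω j) ^ 2)) μ :=
      fun t htt => integrable_finset_sum _ fun j _ => intlη t htt j
    have intB : ∀ t ∈ Finset.Icc 1 T, Integrable (fun ω =>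
        ∑ j, (-(ηb j) * (g t ω j * g' t ω j)
          + L / 2 * (ηb j) ^ 2 * (g t ω j) ^ 2)) μ :=
      fun t htt => integrable_finset_sum _ fun j _ => intlb t htt j
    have intAB : ∀ t ∈ Finset.Icc 1 T, Integrable (fun ω =>
        (∑ j, (-(η t ω j) * (g t ω j * g' t ω j)
          + L / 2 * (η t ω j) ^ 2 * (g t ω j) ^ 2))
        - (∑ j, (-(ηb j) * (g t ω j * g' t ω j)
          + L / 2 * (ηb j) ^ 2 * (g t ω j) ^ 2))) μ :=
      fun t htt => (intA t htt).sub (intB t htt)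
    rw [integral_finset_sum _ fun t htt => intAB t htt]
    exact Finset.sum_congr rfl fun t htt => integral_sub (intA t htt) (intB t htt)
  rw [hLHS, hREG]
  have hK2sum := Finset.sum_le_sum K2
  rw [Finset.sum_add_distrib, Finset.sum_const, Nat.card_Icc] at hK2sum
  have hsub := Finset.sum_sub_distrib (s := Finset.Icc 1 T)
    (f := fun t => ∫ ω, (∑ j, (-(η t ω j) * (g t ω j * g' t ω j)
      + L / 2 * (η t ω j) ^ 2 * (g t ω j) ^ 2)) ∂μ)
    (g := fun t => ∫ ω, (∑ j, (-(ηb j) * (g t ω j * g' t ω j)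
      + L / 2 * (ηb j) ^ 2 * (g t ω j) ^ 2)) ∂μ)
  rw [hS1] at htel
  rw [Finset.sum_neg_distrib] at hK2sum
  have hcard : (T + 1 - 1 : ℕ) = T := by omega
  rw [hcard] at hK2sum
  have hns : (T : ℝ) * (L / 2 * ∑ j, (ηb j) ^ 2 * (σ j) ^ 2)
      = L * T / 2 * ∑ j, (ηb j) ^ 2 * (σ j) ^ 2 := by ring
  have hsmul : (T : ℕ) • (L / 2 * ∑ j, (ηb j) ^ 2 * (σ j) ^ 2)
      = (T : ℝ) * (L / 2 * ∑ j, (ηb j) ^ 2 * (σ j) ^ 2) := by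
    rw [nsmul_eq_mul]
  rw [hsmul, hns] at hK2sum
  rw [hsub]
  linarith [htel, hFstar, hK2sum]
end

section
/- Let T ≥ 3 be an integer, let β be a real number with 1 ≤ β < T, and set α = (β/T)^{1/T}. Then α ≥ 0.69 and α^{T+1}/(1 − α) ≤ 2β/ln(T/β). -/
lemma pow_069_le (T : ℕ) (hT : 3 ≤ T) : (0.69:ℝ)^T * T ≤ 1 := by
  induction T, hT using Nat.le_induction with
  | base => norm_num
  | succ n hn ih =>
    have hn' : (3:ℝ) ≤ n := by exact_mod_cast hn
    have hp : (0:ℝ) ≤ (0.69:ℝ)^n := by positivity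
    push_cast
    rw [pow_succ]
    nlinarith [ih, hp, hn']

/-- Properties of `α = (β/T)^(1/T)`: it is at least `0.69` and
`α^(T+1)/(1-α) ≤ 2β / ln(T/β)`. -/
theorem exp_stepsize_base_bounds (T : ℕ) (hT : 3 ≤ T) (β : ℝ)
    (hβ1 : 1 ≤ β) (hβT : β < T) :
    0.69 ≤ (β / T) ^ ((T : ℝ)⁻¹) ∧
      ((β / T) ^ ((T : ℝ)⁻¹)) ^ (T + 1) / (1 - (β / T) ^ ((T : ℝ)⁻¹)) ≤
        2 * β / Real.log (T / β) := by
  have hTR : (3:ℝ) ≤ T := by exact_mod_cast hT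
  have hT0 : (0:ℝ) < T := by linarith
  have hβ0 : (0:ℝ) < β := by linarith
  have hx0 : (0:ℝ) < β / T := by positivity
  have hx1 : β / T < 1 := (div_lt_one hT0).2 hβT
  have hTne : (T:ℝ) ≠ 0 := ne_of_gt hT0
  have hinvpos : (0:ℝ) < (T:ℝ)⁻¹ := by positivity
  set α := (β / T) ^ ((T:ℝ)⁻¹) with hα
  have h1 : (0.69:ℝ) ≤ α := by
    have h69 : (0.69:ℝ)^T ≤ β / T := by
      have h1T : (0.69:ℝ)^T ≤ 1 / T := by
        rw [le_div_iff₀ hT0]; linarith [pow_069_le T hT]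
      have h2T : (1:ℝ) / T ≤ β / T := by gcongr
      linarith
    have hmono := Real.rpow_le_rpow (by positivity) h69 (le_of_lt hinvpos)
    rwa [← Real.rpow_natCast (0.69:ℝ) T, ← Real.rpow_mul (by norm_num),
      mul_inv_cancel₀ hTne, Real.rpow_one] at hmono
  have hα1 : α < 1 := Real.rpow_lt_one (le_of_lt hx0) hx1 hinvpos
  have hα0 : 0 < α := Real.rpow_pos_of_pos hx0 _
  have hL : 0 < Real.log ((T:ℝ)/β) := Real.log_pos (by rw [lt_div_iff₀ hβ0]; linarith)
  set L := Real.log ((T:ℝ)/β) with hLdef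
  have hαexp : α = Real.exp (-(L / T)) := by
    rw [hα, Real.rpow_def_of_pos hx0]
    congr 1
    rw [Real.log_div (ne_of_gt hβ0) hTne, hLdef, Real.log_div hTne (ne_of_gt hβ0)]
    field_simp
    ring
  have hexp : L/T + 1 ≤ Real.exp (L/T) := Real.add_one_le_exp _
  have hprod : Real.exp (-(L/T)) * Real.exp (L/T) = 1 := by
    rw [← Real.exp_add]; simp
  have hkey : α * (L/T) ≤ 1 - α := by
    rw [hαexp]
    nlinarith [mul_nonneg (le_of_lt (Real.exp_pos (-(L/T)))) (by linarith : (0:ℝ) ≤ Real.exp (L/T) - (L/T + 1))]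
  have hαT : α ^ T = β / T := by
    rw [hα, ← Real.rpow_natCast ((β/T) ^ ((T:ℝ)⁻¹)) T, ← Real.rpow_mul (le_of_lt hx0),
      inv_mul_cancel₀ hTne, Real.rpow_one]
  have h1α : 0 < 1 - α := by linarith
  have hkey2 : α * L ≤ (1 - α) * T := by
    have h := mul_le_mul_of_nonneg_right hkey (le_of_lt hT0)
    calc α * L = α * (L / T) * T := by field_simp
      _ ≤ (1 - α) * T := h
  refine ⟨h1, ?_⟩
  rw [pow_succ, hαT, div_le_div_iff₀ h1α hL, div_mul_eq_mul_div, div_mul_eq_mul_div,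
    div_le_iff₀ hT0]
  nlinarith [mul_le_mul_of_nonneg_left hkey2 (le_of_lt hβ0),
    mul_nonneg (le_of_lt hβ0) (mul_nonneg (le_of_lt h1α) (le_of_lt hT0))]
end

section
/- Let a ≥ 0 and b > 0 be real numbers and T ≥ 0 an integer. Then Σ_{t=0}^T exp(−bt)·t^a ≤ 2·exp(−a)·(a/b)^a + Γ(a+1)/b^{a+1}, where Γ is the Gamma function (with the conventions 0⁰ = 1, so the term at t = 0 is 1 when a = 0 and 0 when a > 0, and (a/b)^a = 1 when a = 0). -/
open scoped BigOperators
open MeasureTheory Set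

/-- Bound on `∑_{t=0}^T exp(-bt) t^a` via the Gamma function. -/
theorem sum_exp_neg_mul_pow_le (a b : ℝ) (ha : 0 ≤ a) (hb : 0 < b) (T : ℕ) :
    ∑ t ∈ Finset.range (T + 1), Real.exp (-b * t) * (t : ℝ) ^ a ≤
      2 * Real.exp (-a) * (a / b) ^ a + Real.Gamma (a + 1) / b ^ (a + 1) := by
  set f : ℝ → ℝ := fun x => Real.exp (-b * x) * x ^ a with hf
  have hf0 : ∀ x : ℝ, 0 ≤ x → 0 ≤ f x := fun x hx =>
    mul_nonneg (Real.exp_pos _).le (Real.rpow_nonneg hx a)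
  -- continuity / integrability
  have hfc : ContinuousOn f (Set.Ici (0:ℝ)) := by
    apply ContinuousOn.mul (Continuous.continuousOn (by continuity))
    exact ContinuousOn.rpow_const continuousOn_id (fun x _ => Or.inr ha)
  have hInt : ∀ u v : ℝ, 0 ≤ u → u ≤ v → IntervalIntegrable f volume u v := by
    intro u v hu huv
    apply ContinuousOn.intervalIntegrable
    rw [Set.uIcc_of_le huv]
    exact hfc.mono (fun x hx => le_trans hu hx.1)
  -- monotone on [0, a/b]
  have hmono : ∀ x y : ℝ, 0 < x → x ≤ y → y ≤ a / b → f x ≤ f y := by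
    intro x y hx hxy hyc
    have hy : 0 < y := lt_of_lt_of_le hx hxy
    have hby : b * y ≤ a := by
      have := (le_div_iff₀ hb).1 hyc
      linarith
    have h1 : Real.log x - Real.log y ≤ x / y - 1 := by
      rw [← Real.log_div hx.ne' hy.ne']
      exact Real.log_le_sub_one_of_pos (div_pos hx hy)
    have h2 : a * (x / y - 1) ≤ b * (x - y) := by
      rw [show x / y - 1 = (x - y) / y by field_simp, mul_div_assoc', div_le_iff₀ hy]
      nlinarith [mul_nonneg (sub_nonneg.2 hxy) (sub_nonneg.2 hby)]
    have key : a * (Real.log x - Real.log y) ≤ b * (x - y) :=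
      le_trans (mul_le_mul_of_nonneg_left h1 ha) h2
    rw [hf]
    simp only
    rw [Real.rpow_def_of_pos hx, Real.rpow_def_of_pos hy, ← Real.exp_add, ← Real.exp_add,
      Real.exp_le_exp]
    nlinarith [key]
  -- antitone on [a/b, ∞)
  have hanti : ∀ x y : ℝ, a / b ≤ x → 0 < x → x ≤ y → f y ≤ f x := by
    intro x y hcx hx hxy
    have hy : 0 < y := lt_of_lt_of_le hx hxy
    have hbx : a ≤ b * x := by
      rw [div_le_iff₀ hb] at hcx; linarith
    have h1 : Real.log y - Real.log x ≤ y / x - 1 := by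
      rw [← Real.log_div hy.ne' hx.ne']
      exact Real.log_le_sub_one_of_pos (div_pos hy hx)
    have h2 : a * (y / x - 1) ≤ b * (y - x) := by
      rw [show y / x - 1 = (y - x) / x by field_simp, mul_div_assoc', div_le_iff₀ hx]
      nlinarith [mul_nonneg (sub_nonneg.2 hxy) (sub_nonneg.2 hbx)]
    have key : a * (Real.log y - Real.log x) ≤ b * (y - x) :=
      le_trans (mul_le_mul_of_nonneg_left h1 ha) h2
    rw [hf]
    simp only
    rw [Real.rpow_def_of_pos hx, Real.rpow_def_of_pos hy, ← Real.exp_add, ← Real.exp_add,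
      Real.exp_le_exp]
    nlinarith [key]
  -- global max
  have hmax : ∀ x : ℝ, 0 ≤ x → f x ≤ Real.exp (-a) * (a / b) ^ a := by
    intro x hx
    rcases eq_or_lt_of_le ha with h0 | hapos
    · simp only [hf, ← h0, Real.rpow_zero, mul_one, neg_zero, Real.exp_zero, one_mul]
      exact Real.exp_le_one_iff.2 (by nlinarith)
    · rcases eq_or_lt_of_le hx with h0 | hxpos
      · have : f x = 0 := by
          simp [hf, ← h0, Real.zero_rpow hapos.ne']
        rw [this]
        positivity
      · have hab : 0 < a / b := div_pos hapos hb
        have h1 : Real.log x - Real.log (a / b) ≤ x / (a / b) - 1 := by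
          rw [← Real.log_div hxpos.ne' hab.ne']
          exact Real.log_le_sub_one_of_pos (div_pos hxpos hab)
        have h2 : a * (x / (a / b) - 1) = b * x - a := by
          field_simp
        have key : a * (Real.log x - Real.log (a / b)) ≤ b * x - a := by
          calc a * (Real.log x - Real.log (a / b)) ≤ a * (x / (a / b) - 1) :=
                mul_le_mul_of_nonneg_left h1 ha
            _ = b * x - a := h2
        rw [hf]
        simp only
        rw [Real.rpow_def_of_pos hxpos, Real.rpow_def_of_pos hab, ← Real.exp_add,
          ← Real.exp_add, Real.exp_le_exp]
        nlinarith [key]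
  -- floor
  set m : ℕ := ⌊a / b⌋₊ with hm
  have hmle : (m : ℝ) ≤ a / b := Nat.floor_le (div_nonneg ha hb.le)
  have hlem : a / b ≤ (m : ℝ) + 1 := (Nat.lt_floor_add_one _).le
  set N : ℕ := max T (m + 1) with hN
  have hmN : m + 1 ≤ N := le_max_right _ _
  -- step lemma
  have step : ∀ (u c : ℝ), 0 ≤ u → (∀ x ∈ Set.Icc u (u + 1), c ≤ f x) →
      c ≤ ∫ x in u..(u + 1), f x := by
    intro u c hu h
    have : ∫ x in u..(u + 1), c = c := by simp
    rw [← this]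
    exact intervalIntegral.integral_mono_on (by linarith) intervalIntegrable_const
      (hInt u (u + 1) hu (by linarith)) h
  -- Part A
  have hA : ∑ t ∈ Finset.range m, f t ≤ ∫ x in (0:ℝ)..(m:ℝ), f x := by
    have hterm : ∀ i ∈ Finset.range m, f i ≤ ∫ x in (i:ℝ)..((i:ℝ) + 1), f x := by
      intro i hi
      rw [Finset.mem_range] at hi
      have h1 : (i:ℝ) + 1 ≤ a / b := by
        calc (i:ℝ) + 1 ≤ m := by exact_mod_cast Nat.succ_le_of_lt hi
          _ ≤ a / b := hmle
      apply step _ _ (Nat.cast_nonneg i)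
      intro x hx
      rcases Nat.eq_zero_or_pos i with h0 | hpos
      · have hapos : 0 < a := by
          have h1b : (1:ℝ) ≤ a / b := by rw [h0] at h1; simpa using h1
          have := (one_le_div hb).1 h1b
          linarith
        have : f i = 0 := by
          simp [hf, h0, Real.zero_rpow hapos.ne']
        rw [this]
        exact hf0 x (le_trans (by simp [h0]) hx.1)
      · exact hmono _ _ (by exact_mod_cast hpos) hx.1 (le_trans hx.2 h1)
    calc ∑ t ∈ Finset.range m, f t ≤ ∑ i ∈ Finset.range m, ∫ x in (i:ℝ)..((i:ℝ) + 1), f x :=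
        Finset.sum_le_sum hterm
      _ = ∫ x in (0:ℝ)..(m:ℝ), f x := by
        have := intervalIntegral.sum_integral_adjacent_intervals (a := fun i : ℕ => (i:ℝ))
          (n := m) (f := f) (fun i _ => by
            push_cast
            exact hInt i (i + 1) (Nat.cast_nonneg i) (by linarith))
        push_cast at this ⊢
        exact this
  -- Part B
  have hB : f m + f ((m:ℝ) + 1) ≤ 2 * Real.exp (-a) * (a / b) ^ a := by
    have h1 := hmax (m:ℝ) (Nat.cast_nonneg m)
    have h2 := hmax ((m:ℝ) + 1) (by positivity)
    linarith
  -- Part C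
  have hC : ∑ t ∈ Finset.Ico (m + 2) (N + 1), f t ≤ ∫ x in ((m:ℝ) + 1)..(N:ℝ), f x := by
    have hk : N + 1 - (m + 2) = N - (m + 1) := by omega
    rw [Finset.sum_Ico_eq_sum_range, hk]
    have hadj := intervalIntegral.sum_integral_adjacent_intervals
      (a := fun i : ℕ => (m:ℝ) + 1 + i) (n := N - (m + 1)) (f := f)
      (fun i _ => by
        push_cast
        exact hInt _ _ (by positivity) (by linarith))
    simp only [Nat.cast_zero, add_zero] at hadj
    have hkc : ((N - (m + 1) : ℕ) : ℝ) = (N:ℝ) - (m:ℝ) - 1 := by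
      rw [Nat.cast_sub hmN]; push_cast; ring
    rw [hkc, show (m:ℝ) + 1 + ((N:ℝ) - (m:ℝ) - 1) = (N:ℝ) by ring] at hadj
    rw [← hadj]
    apply Finset.sum_le_sum
    intro i _
    rw [show ((m + 2 + i : ℕ) : ℝ) = ((m:ℝ) + 1 + (i:ℝ)) + 1 from by push_cast; ring,
      show ((m:ℝ) + 1 + ((i + 1 : ℕ) : ℝ)) = ((m:ℝ) + 1 + (i:ℝ)) + 1 from by push_cast; ring]
    apply step _ _ (by positivity)
    intro x hx
    have hi0 : (0:ℝ) ≤ (i:ℝ) := Nat.cast_nonneg i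
    exact hanti x _ (le_trans hlem (by linarith [hx.1]))
      (lt_of_lt_of_le (by positivity) hx.1) (by linarith [hx.2])
  -- Gamma integral
  have hIoi : IntegrableOn f (Set.Ioi (0:ℝ)) := by
    have h := integrableOn_rpow_mul_exp_neg_mul_rpow (p := 1) (s := a) (b := b)
      (by linarith) one_pos hb
    simp only [Real.rpow_one] at h
    exact h.congr_fun (fun x _ => mul_comm _ _) measurableSet_Ioi
  have hΓ : ∫ x in Set.Ioi (0:ℝ), f x = Real.Gamma (a + 1) / b ^ (a + 1) := by
    have h := Real.integral_rpow_mul_exp_neg_mul_Ioi (a := a + 1) (r := b) (by linarith) hb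
    simp only [add_sub_cancel_right] at h
    calc ∫ x in Set.Ioi (0:ℝ), f x = ∫ x in Set.Ioi (0:ℝ), x ^ a * Real.exp (-(b * x)) := by
          refine setIntegral_congr_fun measurableSet_Ioi (fun x _ => ?_)
          rw [hf]; simp only; rw [mul_comm, neg_mul]
      _ = (1 / b) ^ (a + 1) * Real.Gamma (a + 1) := h
      _ = Real.Gamma (a + 1) / b ^ (a + 1) := by
          rw [one_div, Real.inv_rpow hb.le, mul_comm, div_eq_mul_inv]
  -- integral bound
  have hintle : (∫ x in (0:ℝ)..(m:ℝ), f x) + (∫ x in ((m:ℝ) + 1)..(N:ℝ), f x)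
      ≤ Real.Gamma (a + 1) / b ^ (a + 1) := by
    have hmN' : (m:ℝ) + 1 ≤ (N:ℝ) := by exact_mod_cast hmN
    rw [intervalIntegral.integral_of_le (Nat.cast_nonneg m),
      intervalIntegral.integral_of_le hmN']
    have hs1 : Set.Ioc (0:ℝ) (m:ℝ) ⊆ Set.Ioi 0 := Set.Ioc_subset_Ioi_self
    have hs2 : Set.Ioc ((m:ℝ) + 1) (N:ℝ) ⊆ Set.Ioi 0 := fun x hx =>
      lt_trans (by positivity) hx.1
    have hdisj : Disjoint (Set.Ioc (0:ℝ) (m:ℝ)) (Set.Ioc ((m:ℝ) + 1) (N:ℝ)) := by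
      rw [Set.disjoint_left]
      rintro x ⟨_, h2⟩ ⟨h3, _⟩
      linarith
    rw [← MeasureTheory.setIntegral_union hdisj measurableSet_Ioc (hIoi.mono_set hs1)
      (hIoi.mono_set hs2)]
    calc (∫ x in (Set.Ioc (0:ℝ) (m:ℝ) ∪ Set.Ioc ((m:ℝ) + 1) (N:ℝ)), f x)
        ≤ ∫ x in Set.Ioi (0:ℝ), f x := by
          apply setIntegral_mono_set hIoi
          · filter_upwards [ae_restrict_mem measurableSet_Ioi] with x hx
            exact hf0 x hx.le
          · exact HasSubset.Subset.eventuallyLE (Set.union_subset hs1 hs2)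
      _ = Real.Gamma (a + 1) / b ^ (a + 1) := hΓ
  -- assemble
  have hsub : ∑ t ∈ Finset.range (T + 1), f t ≤ ∑ t ∈ Finset.range (N + 1), f t := by
    apply Finset.sum_le_sum_of_subset_of_nonneg
    · exact Finset.range_subset_range.2 (by omega)
    · intro t _ _; exact hf0 t (Nat.cast_nonneg t)
  have hmid : ∑ t ∈ Finset.Ico m (m + 2), f t = f (m:ℝ) + f ((m:ℝ) + 1) := by
    rw [show m + 2 = m + 1 + 1 from rfl, Finset.sum_Ico_succ_top (by omega),
      Finset.sum_Ico_succ_top (by omega), Finset.Ico_self, Finset.sum_empty, zero_add]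
    push_cast
    ring
  have hsplit : ∑ t ∈ Finset.range (N + 1), f t =
      (∑ t ∈ Finset.range m, f t) + (f (m:ℝ) + f ((m:ℝ) + 1)) + ∑ t ∈ Finset.Ico (m + 2) (N + 1), f t := by
    rw [Finset.range_eq_Ico,
      ← Finset.sum_Ico_consecutive _ (Nat.zero_le m) (show m ≤ N + 1 by omega),
      ← Finset.sum_Ico_consecutive _ (show m ≤ m + 2 by omega) (show m + 2 ≤ N + 1 by omega),
      hmid, ← Finset.range_eq_Ico]
    ring
  calc ∑ t ∈ Finset.range (T + 1), f t ≤ ∑ t ∈ Finset.range (N + 1), f t := hsub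
    _ = (∑ t ∈ Finset.range m, f t) + (f m + f ((m:ℝ) + 1)) + ∑ t ∈ Finset.Ico (m + 2) (N + 1), f t := hsplit
    _ ≤ (∫ x in (0:ℝ)..(m:ℝ), f x) + (2 * Real.exp (-a) * (a / b) ^ a) + (∫ x in ((m:ℝ) + 1)..(N:ℝ), f x) := by
        gcongr
    _ ≤ 2 * Real.exp (-a) * (a / b) ^ a + Real.Gamma (a + 1) / b ^ (a + 1) := by
        linarith [hintle]
end

section
/- Let K ⊂ ℝ^d be a product of closed bounded intervals (a hypercube) with ‖x − y‖_∞ ≤ D_∞ for all x, y ∈ K, and let F: ℝ^d → ℝ be differentiable and convex. Run per-coordinate AdaGrad: starting from x₁ ∈ K, with η = D_∞/√2, set η_{t,j} = η/√(Σ_{i=1}^t (∂_j F(x_i))²) (assuming Σ_{i=1}^t (∂_j F(x_i))² > 0 for all t, j) and x_{t+1} = Π_K(x_t − η_t ∘ ∇F(x_t)), where ∘ is the coordinate-wise product and Π_K the Euclidean projection onto K. Then for any x ∈ K: Σ_{t=1}^T (F(x_t) − F(x)) ≤ √(2 d D_∞² · Σ_{t=1}^T ‖∇F(x_t)‖₂²).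 -/
open RealInnerProductSpace

lemma tele_bound (a c : ℕ → ℝ) (D2 : ℝ)
    (ha0 : ∀ t, 0 ≤ a t) (hc0 : ∀ t, 0 ≤ c t) (hcmono : ∀ t, c t ≤ c (t+1)) :
    ∀ T, 1 ≤ T → (∀ t, 1 ≤ t → t ≤ T → a t ≤ D2) →
    ∑ t ∈ Finset.Icc 1 T, (a t - a (t+1)) * c t ≤ D2 * c T - a (T+1) * c T := by
  intro T
  induction T with
  | zero => omega
  | succ n ih =>
    intro _ hb
    rcases Nat.eq_or_lt_of_le (by omega : 1 ≤ n + 1) with h1 | h1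
    · simp only [← h1]
      norm_num [Finset.Icc_self]
      nlinarith [hc0 1, hb 1 le_rfl (by omega), ha0 2]
    · have hn : 1 ≤ n := by omega
      rw [Finset.sum_Icc_succ_top (by omega : 1 ≤ n + 1)]
      have := ih hn (fun t h1 h2 => hb t h1 (by omega))
      nlinarith [hcmono n, ha0 (n+1), ha0 (n+2), hb (n+1) (by omega) le_rfl, hc0 n, hc0 (n+1)]

lemma sum_div_sqrt (u : ℕ → ℝ) (hu : ∀ t, 0 ≤ u t) :
    ∀ T, 1 ≤ T → (∀ t, 1 ≤ t → t ≤ T → 0 < ∑ i ∈ Finset.Icc 1 t, u i) →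
    ∑ t ∈ Finset.Icc 1 T, u t / Real.sqrt (∑ i ∈ Finset.Icc 1 t, u i)
      ≤ 2 * Real.sqrt (∑ i ∈ Finset.Icc 1 T, u i) := by
  intro T
  induction T with
  | zero => omega
  | succ n ih =>
    intro _ hp
    rcases Nat.eq_or_lt_of_le (by omega : 1 ≤ n + 1) with h1 | h1
    · simp only [← h1]
      norm_num [Finset.Icc_self]
      have h0 : 0 < u 1 := by have := hp 1 le_rfl (by omega); simpa [Finset.Icc_self] using this
      nlinarith [Real.sqrt_nonneg (u 1)]
    · have hn : 1 ≤ n := by omega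
      rw [Finset.sum_Icc_succ_top (by omega : 1 ≤ n + 1)]
      have ihh := ih hn (fun t h1 h2 => hp t h1 (by omega))
      have hSn : 0 < ∑ i ∈ Finset.Icc 1 n, u i := hp n hn (by omega)
      have hSn1 : 0 < ∑ i ∈ Finset.Icc 1 (n+1), u i := hp (n+1) (by omega) le_rfl
      rw [Finset.sum_Icc_succ_top (by omega : 1 ≤ n + 1)] at hSn1
      have hrw : ∑ i ∈ Finset.Icc 1 (n+1), u i = (∑ i ∈ Finset.Icc 1 n, u i) + u (n+1) :=
        Finset.sum_Icc_succ_top (by omega) u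
      rw [hrw]
      set A := ∑ i ∈ Finset.Icc 1 n, u i with hA
      have hs : 0 < Real.sqrt A := Real.sqrt_pos.2 hSn
      have hs1 : 0 < Real.sqrt (A + u (n+1)) := Real.sqrt_pos.2 hSn1
      have key : u (n+1) / Real.sqrt (A + u (n+1)) ≤ 2 * Real.sqrt (A + u (n+1)) - 2 * Real.sqrt A := by
        rw [div_le_iff₀ hs1]
        nlinarith [Real.sq_sqrt hSn.le, Real.sq_sqrt hSn1.le, sq_nonneg (Real.sqrt (A + u (n+1)) - Real.sqrt A)]
      linarith

lemma clamp_contract (lo hi v u : ℝ) (hlo : lo ≤ u) (hhi : u ≤ hi) :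
    (max lo (min v hi) - u)^2 ≤ (v - u)^2 := by
  rcases le_total v lo with h | h
  · rw [min_eq_left (h.trans (hlo.trans hhi)), max_eq_left h]
    nlinarith
  · rcases le_total v hi with h2 | h2
    · rw [min_eq_left h2, max_eq_right h]
    · rw [min_eq_right h2, max_eq_right (hlo.trans hhi)]
      nlinarith

lemma grad_ineq_s13 {d : ℕ} {F : EuclideanSpace ℝ (Fin d) → ℝ}
    (hdiff : Differentiable ℝ F) (hconv : ConvexOn ℝ Set.univ F)
    (p q : EuclideanSpace ℝ (Fin d)) :
    F p - F q ≤ ∑ j, gradient F p j * (p j - q j) := by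
  set v := q - p with hv
  set φ : ℝ → ℝ := fun s => F (p + s • v) with hφ
  have hline : ∀ s : ℝ, HasDerivAt (fun s : ℝ => p + s • v) v s := by
    intro s
    simpa using ((hasDerivAt_id s).smul_const v).const_add p
  have hder : ∀ s : ℝ, HasDerivAt φ ((fderiv ℝ F (p + s • v)) v) s := by
    intro s
    exact (hdiff (p + s • v)).hasFDerivAt.comp_hasDerivAt s (hline s)
  have hφconv : ConvexOn ℝ Set.univ φ := by
    refine ⟨convex_univ, ?_⟩
    intro a _ b _ ka kb hka hkb hk
    have := hconv.2 (Set.mem_univ (p + a • v)) (Set.mem_univ (p + b • v)) hka hkb hk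
    have heq : p + (ka * a + kb * b) • v = ka • (p + a • v) + kb • (p + b • v) := by
      rw [show (ka : ℝ) • (p + a • v) + kb • (p + b • v)
          = (ka + kb) • p + (ka * a + kb * b) • v by module, hk, one_smul]
    simpa [hφ, heq] using this
  have hslope := hφconv.deriv_le_slope (Set.mem_univ 0) (Set.mem_univ 1) one_pos
    (hder 0).differentiableAt
  rw [(hder 0).deriv] at hslope
  have hsl : slope φ 0 1 = F q - F p := by
    simp [slope, hφ, hv]
  rw [hsl] at hslope
  have hinner : (fderiv ℝ F (p + (0:ℝ) • v)) v = ∑ j, gradient F p j * v j := by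
    simp only [zero_smul, add_zero]
    rw [show (fderiv ℝ F p) v = ⟪gradient F p, v⟫ from (InnerProductSpace.toDual_symm_apply).symm]
    rw [PiLp.inner_apply]
    simp only [RCLike.inner_apply, conj_trivial]
    exact Finset.sum_congr rfl fun j _ => by ring
  rw [hinner] at hslope
  have hvj : ∀ j, v j = q j - p j := fun j => rfl
  have hsum : ∑ j, gradient F p j * (p j - q j) = -∑ j, gradient F p j * v j := by
    rw [← Finset.sum_neg_distrib]
    exact Finset.sum_congr rfl fun j _ => by rw [hvj j]; ring
  rw [hsum]
  linarith

lemma proj_eq_clamp {d : ℕ} (lo hi : Fin d → ℝ)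
    (K : Set (EuclideanSpace ℝ (Fin d)))
    (hK : K = {z : EuclideanSpace ℝ (Fin d) | ∀ j, z j ∈ Set.Icc (lo j) (hi j)})
    (hlohi : ∀ j, lo j ≤ hi j)
    (proj : EuclideanSpace ℝ (Fin d) → EuclideanSpace ℝ (Fin d))
    (hprojmem : ∀ z, proj z ∈ K)
    (hproj : ∀ z, ∀ y ∈ K, ‖proj z - z‖ ≤ ‖y - z‖)
    (z : EuclideanSpace ℝ (Fin d)) :
    ∀ j, proj z j = max (lo j) (min (z j) (hi j)) := by
  have hKconv : Convex ℝ K := by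
    rw [hK]
    intro a ha b hb ka kb hka hkb hk j
    have h1 := ha j
    have h2 := hb j
    have hadd : (ka • a + kb • b) j = ka * a j + kb * b j := rfl
    rw [Set.mem_Icc] at h1 h2
    rw [Set.mem_Icc, hadd]
    constructor
    · calc lo j = ka * lo j + kb * lo j := by rw [← add_mul, hk, one_mul]
        _ ≤ ka * a j + kb * b j :=
          add_le_add (mul_le_mul_of_nonneg_left h1.1 hka) (mul_le_mul_of_nonneg_left h2.1 hkb)
    · calc ka * a j + kb * b j
          ≤ ka * hi j + kb * hi j :=
          add_le_add (mul_le_mul_of_nonneg_left h1.2 hka) (mul_le_mul_of_nonneg_left h2.2 hkb)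
        _ = hi j := by rw [← add_mul, hk, one_mul]
  haveI : Nonempty K := ⟨⟨proj z, hprojmem z⟩⟩
  have hVI : ∀ w ∈ K, ⟪z - proj z, w - proj z⟫ ≤ 0 := by
    rw [← norm_eq_iInf_iff_real_inner_le_zero hKconv (hprojmem z)]
    apply le_antisymm
    · apply le_ciInf
      intro w
      rw [norm_sub_rev z (proj z), norm_sub_rev z w.1]
      exact hproj z w.1 w.2
    · refine ciInf_le ?_ (⟨proj z, hprojmem z⟩ : K)
      refine ⟨0, ?_⟩
      rintro r ⟨w, rfl⟩
      exact norm_nonneg _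
  set c : EuclideanSpace ℝ (Fin d) :=
    (EuclideanSpace.equiv (Fin d) ℝ).symm (fun j => max (lo j) (min (z j) (hi j))) with hc
  have hcj : ∀ j, c j = max (lo j) (min (z j) (hi j)) := fun j => rfl
  have hcK : c ∈ K := by
    rw [hK]
    intro j
    rw [Set.mem_Icc, hcj j]
    refine ⟨le_max_left _ _, max_le (hlohi j) (min_le_right _ _)⟩
  have hVIc : ∀ j, (z j - c j) * (proj z j - c j) ≤ 0 := by
    intro j
    have hpj : lo j ≤ proj z j ∧ proj z j ≤ hi j := by
      have := hprojmem z; rw [hK] at this; exact this j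
    rw [hcj j]
    rcases le_total (z j) (lo j) with h | h
    · rw [min_eq_left (h.trans (hlohi j)), max_eq_left h]
      nlinarith [hpj.1]
    · rcases le_total (z j) (hi j) with h2 | h2
      · rw [min_eq_left h2, max_eq_right h]; simp
      · rw [min_eq_right h2, max_eq_right (hlohi j)]
        nlinarith [hpj.2]
  have hsum1 : ∑ j, (z j - proj z j) * (c j - proj z j) ≤ 0 := by
    have h := hVI c hcK
    rw [PiLp.inner_apply] at h
    simpa [RCLike.inner_apply, mul_comm] using h
  have hsum2 : ∑ j, (z j - c j) * (proj z j - c j) ≤ 0 :=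
    Finset.sum_nonpos (fun j _ => hVIc j)
  have hsq : ∑ j, (proj z j - c j)^2 ≤ 0 := by
    have hr : ∀ j : Fin d, (proj z j - c j)^2 =
        (z j - proj z j) * (c j - proj z j) + (z j - c j) * (proj z j - c j) := fun j => by ring
    rw [Finset.sum_congr rfl (fun j _ => hr j), Finset.sum_add_distrib]
    linarith
  intro j
  have hnn : ∀ i ∈ Finset.univ, (0:ℝ) ≤ (proj z i - c i)^2 := fun i _ => sq_nonneg _
  have hz : (proj z j - c j)^2 = 0 :=
    (Finset.sum_eq_zero_iff_of_nonneg hnn).1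
      (le_antisymm hsq (Finset.sum_nonneg hnn)) j (Finset.mem_univ j)
  have : proj z j = c j := sub_eq_zero.1 (pow_eq_zero_iff two_ne_zero |>.1 hz)
  rw [this, hcj j]

set_option maxHeartbeats 1000000 in
/-- Regret-type bound for per-coordinate AdaGrad on a hypercube. -/
theorem adagrad_per_coordinate_hypercube_bound {d : ℕ} (hd : 0 < d)
    (F : EuclideanSpace ℝ (Fin d) → ℝ)
    (hdiff : Differentiable ℝ F) (hconv : ConvexOn ℝ Set.univ F)
    (lo hi : Fin d → ℝ) (K : Set (EuclideanSpace ℝ (Fin d)))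
    (hK : K = {z : EuclideanSpace ℝ (Fin d) | ∀ j, z j ∈ Set.Icc (lo j) (hi j)})
    (Dinf : ℝ)
    (hDinf : ∀ y ∈ K, ∀ z ∈ K, ∀ j, |y j - z j| ≤ Dinf)
    (proj : EuclideanSpace ℝ (Fin d) → EuclideanSpace ℝ (Fin d))
    (hprojmem : ∀ z, proj z ∈ K)
    (hproj : ∀ z, ∀ y ∈ K, ‖proj z - z‖ ≤ ‖y - z‖)
    (T : ℕ) (hT : 1 ≤ T)
    (x : ℕ → EuclideanSpace ℝ (Fin d)) (hx1 : x 1 ∈ K)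
    (hpos : ∀ t ∈ Finset.Icc 1 T, ∀ j,
      0 < ∑ i ∈ Finset.Icc 1 t, (gradient F (x i) j) ^ 2)
    (hupdate : ∀ t ∈ Finset.Icc 1 T,
      x (t + 1) = proj ((EuclideanSpace.equiv (Fin d) ℝ).symm (fun j =>
        x t j - (Dinf / Real.sqrt 2) /
            Real.sqrt (∑ i ∈ Finset.Icc 1 t, (gradient F (x i) j) ^ 2) *
          gradient F (x t) j))) :
    ∀ y ∈ K, ∑ t ∈ Finset.Icc 1 T, (F (x t) - F y) ≤
      Real.sqrt (2 * d * Dinf ^ 2 * ∑ t ∈ Finset.Icc 1 T, ‖gradient F (x t)‖ ^ 2) := by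
  intro y hy
  have hD0 : 0 ≤ Dinf := by
    have := hDinf (x 1) hx1 (x 1) hx1 ⟨0, hd⟩
    simpa using this
  have hlohi : ∀ j, lo j ≤ hi j := by
    intro j
    have h := hx1
    rw [hK] at h
    exact (h j).1.trans (h j).2
  have hyIcc : ∀ j, lo j ≤ y j ∧ y j ≤ hi j := by
    have h := hy; rw [hK] at h; exact fun j => h j
  have hxK : ∀ t, 1 ≤ t → t ≤ T + 1 → x t ∈ K := by
    intro t h1 h2
    obtain ⟨n, rfl⟩ : ∃ n, t = n + 1 := ⟨t - 1, by omega⟩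
    rcases Nat.eq_zero_or_pos n with rfl | hn
    · exact hx1
    · rw [hupdate n (Finset.mem_Icc.2 ⟨hn, by omega⟩)]
      exact hprojmem _
  rcases eq_or_lt_of_le hD0 with hD | hD
  · -- degenerate case Dinf = 0
    have hxy : ∀ t ∈ Finset.Icc 1 T, F (x t) - F y = 0 := by
      intro t ht
      rw [Finset.mem_Icc] at ht
      have hxt := hxK t ht.1 (by omega)
      have hxeq : x t = y := by
        ext j
        have h := hDinf (x t) hxt y hy j
        rw [← hD] at h
        have h0 : x t j - y j = 0 := abs_eq_zero.1 (le_antisymm h (abs_nonneg _))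
        linarith
      rw [hxeq, sub_self]
    rw [Finset.sum_congr rfl hxy, Finset.sum_const, smul_zero]
    exact Real.sqrt_nonneg _
  -- main case : 0 < Dinf
  have hsqrt2 : (0:ℝ) < Real.sqrt 2 := by positivity
  set η := Dinf / Real.sqrt 2 with hηdef
  have hη : 0 < η := div_pos hD hsqrt2
  have hSpos : ∀ t, 1 ≤ t → t ≤ T → ∀ j,
      0 < ∑ i ∈ Finset.Icc 1 t, (gradient F (x i) j) ^ 2 :=
    fun t h1 h2 j => hpos t (Finset.mem_Icc.2 ⟨h1, h2⟩) j
  have hSmono : ∀ j, ∀ t : ℕ,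
      Real.sqrt (∑ i ∈ Finset.Icc 1 t, (gradient F (x i) j) ^ 2)
        ≤ Real.sqrt (∑ i ∈ Finset.Icc 1 (t+1), (gradient F (x i) j) ^ 2) := by
    intro j t
    apply Real.sqrt_le_sqrt
    apply Finset.sum_le_sum_of_subset_of_nonneg (Finset.Icc_subset_Icc_right (by omega))
    intro i _ _; positivity
  have hproj_eq := proj_eq_clamp lo hi K hK hlohi proj hprojmem hproj
  -- per-step per-coordinate inequality
  have hstep : ∀ t, 1 ≤ t → t ≤ T → ∀ j,
      gradient F (x t) j * (x t j - y j) ≤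
        Real.sqrt (∑ i ∈ Finset.Icc 1 t, (gradient F (x i) j) ^ 2) / (2*η) *
            ((x t j - y j)^2 - (x (t+1) j - y j)^2)
          + η / (2 * Real.sqrt (∑ i ∈ Finset.Icc 1 t, (gradient F (x i) j) ^ 2)) *
            (gradient F (x t) j)^2 := by
    intro t h1 h2 j
    set s := Real.sqrt (∑ i ∈ Finset.Icc 1 t, (gradient F (x i) j) ^ 2) with hs
    have hspos : 0 < s := Real.sqrt_pos.2 (hSpos t h1 h2 j)
    have hxt1 : x (t+1) j = max (lo j) (min (x t j - η / s * gradient F (x t) j) (hi j)) := by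
      rw [hupdate t (Finset.mem_Icc.2 ⟨h1, h2⟩)]
      exact hproj_eq _ j
    have hcontr : (x (t+1) j - y j)^2 ≤
        (x t j - η / s * gradient F (x t) j - y j)^2 := by
      rw [hxt1]
      exact clamp_contract _ _ _ _ (hyIcc j).1 (hyIcc j).2
    set a := x t j - y j with ha
    set b := x (t+1) j - y j with hb
    set G := gradient F (x t) j with hG
    have hcontr2 : b^2 ≤ (a - η / s * G)^2 := by
      have : x t j - η / s * G - y j = a - η / s * G := by rw [ha]; ring
      rwa [this] at hcontr
    have hrw : s/(2*η)*(a^2-b^2) + η/(2*s)*G^2 = (s^2*(a^2-b^2) + η^2*G^2)/(2*η*s) := by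
      field_simp
    rw [hrw, le_div_iff₀ (by positivity)]
    have h5 : s^2 * (a - η/s*G)^2 = s^2*a^2 - 2*η*s*(G*a) + η^2*G^2 := by
      field_simp; ring
    have h6 := mul_le_mul_of_nonneg_left hcontr2 (sq_nonneg s)
    rw [h5] at h6
    linarith
  -- per-coordinate total bound
  have hperj : ∀ j, ∑ t ∈ Finset.Icc 1 T,
      (Real.sqrt (∑ i ∈ Finset.Icc 1 t, (gradient F (x i) j) ^ 2) / (2*η) *
          ((x t j - y j)^2 - (x (t+1) j - y j)^2)
        + η / (2 * Real.sqrt (∑ i ∈ Finset.Icc 1 t, (gradient F (x i) j) ^ 2)) *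
          (gradient F (x t) j)^2)
      ≤ Real.sqrt 2 * Dinf *
          Real.sqrt (∑ i ∈ Finset.Icc 1 T, (gradient F (x i) j) ^ 2) := by
    intro j
    set sT := Real.sqrt (∑ i ∈ Finset.Icc 1 T, (gradient F (x i) j) ^ 2) with hsT
    have hsT0 : 0 ≤ sT := Real.sqrt_nonneg _
    rw [Finset.sum_add_distrib]
    have hpart1 : ∑ t ∈ Finset.Icc 1 T,
        Real.sqrt (∑ i ∈ Finset.Icc 1 t, (gradient F (x i) j) ^ 2) / (2*η) *
          ((x t j - y j)^2 - (x (t+1) j - y j)^2)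
        ≤ Dinf^2 * (sT / (2*η)) := by
      have htele := tele_bound (fun t => (x t j - y j)^2)
        (fun t => Real.sqrt (∑ i ∈ Finset.Icc 1 t, (gradient F (x i) j) ^ 2) / (2*η))
        (Dinf^2) (fun t => sq_nonneg _) (fun t => by positivity)
        (fun t => by
          show Real.sqrt (∑ i ∈ Finset.Icc 1 t, (gradient F (x i) j) ^ 2) / (2*η)
              ≤ Real.sqrt (∑ i ∈ Finset.Icc 1 (t+1), (gradient F (x i) j) ^ 2) / (2*η)
          have h := hSmono j t
          gcongr) T hT
        (fun t h1 h2 => by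
          have habs := hDinf (x t) (hxK t h1 (by omega)) y hy j
          have h := abs_le.1 habs
          exact sq_le_sq' (by linarith [h.1]) h.2)
      calc ∑ t ∈ Finset.Icc 1 T,
          Real.sqrt (∑ i ∈ Finset.Icc 1 t, (gradient F (x i) j) ^ 2) / (2*η) *
            ((x t j - y j)^2 - (x (t+1) j - y j)^2)
          = ∑ t ∈ Finset.Icc 1 T,
            ((x t j - y j)^2 - (x (t+1) j - y j)^2) *
              (Real.sqrt (∑ i ∈ Finset.Icc 1 t, (gradient F (x i) j) ^ 2) / (2*η)) :=
            Finset.sum_congr rfl (fun t _ => by ring)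
        _ ≤ Dinf^2 * (sT/(2*η)) - (x (T+1) j - y j)^2 * (sT/(2*η)) := htele
        _ ≤ Dinf^2 * (sT/(2*η)) := by
            have : 0 ≤ (x (T+1) j - y j)^2 * (sT/(2*η)) := by positivity
            linarith
    have hpart2 : ∑ t ∈ Finset.Icc 1 T,
        η / (2 * Real.sqrt (∑ i ∈ Finset.Icc 1 t, (gradient F (x i) j) ^ 2)) *
          (gradient F (x t) j)^2
        ≤ η * sT := by
      have hsd := sum_div_sqrt (fun i => (gradient F (x i) j)^2) (fun i => sq_nonneg _) T hT
        (fun t h1 h2 => hSpos t h1 h2 j)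
      calc ∑ t ∈ Finset.Icc 1 T,
          η / (2 * Real.sqrt (∑ i ∈ Finset.Icc 1 t, (gradient F (x i) j) ^ 2)) *
            (gradient F (x t) j)^2
          = η/2 * ∑ t ∈ Finset.Icc 1 T,
            (gradient F (x t) j)^2 /
              Real.sqrt (∑ i ∈ Finset.Icc 1 t, (gradient F (x i) j) ^ 2) := by
            rw [Finset.mul_sum]
            exact Finset.sum_congr rfl (fun t _ => by ring)
        _ ≤ η/2 * (2 * sT) := mul_le_mul_of_nonneg_left hsd (by positivity)
        _ = η * sT := by ring
    have hcoef : Dinf^2 * (sT/(2*η)) + η * sT = Real.sqrt 2 * Dinf * sT := by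
      have hcoef2 : Dinf^2 / (2*η) + η = Real.sqrt 2 * Dinf := by
        rw [hηdef]
        have h2 : Real.sqrt 2 * Real.sqrt 2 = 2 := Real.mul_self_sqrt (by norm_num)
        field_simp
        nlinarith [h2, hD, hsqrt2]
      calc Dinf^2 * (sT/(2*η)) + η * sT = (Dinf^2/(2*η) + η) * sT := by ring
        _ = Real.sqrt 2 * Dinf * sT := by rw [hcoef2]
    linarith
  -- final chain
  have hnorm : ∀ t : ℕ, ‖gradient F (x t)‖^2 = ∑ j, (gradient F (x t) j)^2 := by
    intro t
    rw [EuclideanSpace.norm_eq, Real.sq_sqrt (by positivity)]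
    exact Finset.sum_congr rfl fun j _ => sq_abs _
  calc ∑ t ∈ Finset.Icc 1 T, (F (x t) - F y)
      ≤ ∑ t ∈ Finset.Icc 1 T, ∑ j, gradient F (x t) j * (x t j - y j) :=
        Finset.sum_le_sum fun t _ => grad_ineq_s13 hdiff hconv (x t) y
    _ ≤ ∑ t ∈ Finset.Icc 1 T, ∑ j,
        (Real.sqrt (∑ i ∈ Finset.Icc 1 t, (gradient F (x i) j) ^ 2) / (2*η) *
            ((x t j - y j)^2 - (x (t+1) j - y j)^2)
          + η / (2 * Real.sqrt (∑ i ∈ Finset.Icc 1 t, (gradient F (x i) j) ^ 2)) *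
            (gradient F (x t) j)^2) := by
        refine Finset.sum_le_sum fun t ht => Finset.sum_le_sum fun j _ => ?_
        rw [Finset.mem_Icc] at ht
        exact hstep t ht.1 ht.2 j
    _ = ∑ j, ∑ t ∈ Finset.Icc 1 T,
        (Real.sqrt (∑ i ∈ Finset.Icc 1 t, (gradient F (x i) j) ^ 2) / (2*η) *
            ((x t j - y j)^2 - (x (t+1) j - y j)^2)
          + η / (2 * Real.sqrt (∑ i ∈ Finset.Icc 1 t, (gradient F (x i) j) ^ 2)) *
            (gradient F (x t) j)^2) := Finset.sum_comm
    _ ≤ ∑ j, Real.sqrt 2 * Dinf *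
          Real.sqrt (∑ i ∈ Finset.Icc 1 T, (gradient F (x i) j) ^ 2) :=
        Finset.sum_le_sum fun j _ => hperj j
    _ = Real.sqrt 2 * Dinf *
          ∑ j, Real.sqrt (∑ i ∈ Finset.Icc 1 T, (gradient F (x i) j) ^ 2) := by
        rw [Finset.mul_sum]
    _ ≤ Real.sqrt 2 * Dinf *
          Real.sqrt (d * ∑ j, ∑ i ∈ Finset.Icc 1 T, (gradient F (x i) j) ^ 2) := by
        apply mul_le_mul_of_nonneg_left ?_ (by positivity)
        have h1 : (0:ℝ) ≤ ∑ j, Real.sqrt (∑ i ∈ Finset.Icc 1 T, (gradient F (x i) j) ^ 2) :=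
          Finset.sum_nonneg fun j _ => Real.sqrt_nonneg _
        refine (Real.le_sqrt h1 (by positivity)).2 ?_
        calc (∑ j, Real.sqrt (∑ i ∈ Finset.Icc 1 T, (gradient F (x i) j) ^ 2))^2
            ≤ (Finset.univ.card : ℝ) *
              ∑ j, (Real.sqrt (∑ i ∈ Finset.Icc 1 T, (gradient F (x i) j) ^ 2))^2 := by
              exact sq_sum_le_card_mul_sum_sq
          _ = d * ∑ j, ∑ i ∈ Finset.Icc 1 T, (gradient F (x i) j) ^ 2 := by
              rw [Finset.card_univ, Fintype.card_fin]
              congr 1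
              exact Finset.sum_congr rfl fun j _ => Real.sq_sqrt (by positivity)
    _ = Real.sqrt (2 * d * Dinf ^ 2 * ∑ t ∈ Finset.Icc 1 T, ‖gradient F (x t)‖ ^ 2) := by
        have hswap : ∑ j, ∑ i ∈ Finset.Icc 1 T, (gradient F (x i) j)^2
            = ∑ t ∈ Finset.Icc 1 T, ‖gradient F (x t)‖^2 := by
          rw [Finset.sum_comm]
          exact Finset.sum_congr rfl fun t _ => (hnorm t).symm
        rw [hswap]
        have hX0 : (0:ℝ) ≤ ∑ t ∈ Finset.Icc 1 T, ‖gradient F (x t)‖^2 :=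
          Finset.sum_nonneg fun t _ => sq_nonneg _
        rw [show 2*(d:ℝ)*Dinf^2 * ∑ t ∈ Finset.Icc 1 T, ‖gradient F (x t)‖^2
            = (Real.sqrt 2 * Dinf)^2 * ((d:ℝ) * ∑ t ∈ Finset.Icc 1 T, ‖gradient F (x t)‖^2) by
          rw [mul_pow, Real.sq_sqrt (by norm_num : (0:ℝ) ≤ 2)]; ring]
        rw [Real.sqrt_mul (sq_nonneg (Real.sqrt 2 * Dinf)),
          Real.sqrt_sq (by positivity : (0:ℝ) ≤ Real.sqrt 2 * Dinf)]
end

section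
/- Let F: ℝ → ℝ be twice continuously differentiable. Then the following are equivalent: (1) there exist K₀ ≥ 0 and K₁ > 0 such that for all x, y ∈ ℝ with |y − x| ≤ 1/K₁, |F′(y) − F′(x)| ≤ (K₀ + K₁|F′(x)|)·|y − x|; (2) there exist L₀, L₁ ≥ 0 such that |F″(x)| ≤ L₀ + L₁|F′(x)| for all x ∈ ℝ. -/
/-- Equivalence of the two formulations of `(L₀, L₁)`-smoothness for
twice continuously differentiable functions on `ℝ`. -/
theorem relaxed_smoothness_equivalence (F : ℝ → ℝ) (hF : ContDiff ℝ 2 F) :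
    (∃ K₀ K₁ : ℝ, 0 ≤ K₀ ∧ 0 < K₁ ∧
      ∀ x y : ℝ, |y - x| ≤ 1 / K₁ →
        |deriv F y - deriv F x| ≤ (K₀ + K₁ * |deriv F x|) * |y - x|) ↔
    (∃ L₀ L₁ : ℝ, 0 ≤ L₀ ∧ 0 ≤ L₁ ∧
      ∀ x : ℝ, |deriv (deriv F) x| ≤ L₀ + L₁ * |deriv F x|) := by
  have hF2 : ContDiff ℝ 1 (deriv F) := by
    rw [show (2 : WithTop ℕ∞) = 1 + 1 from rfl, contDiff_succ_iff_deriv] at hF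
    exact hF.2.2
  have hdF : Differentiable ℝ (deriv F) ∧ Continuous (deriv (deriv F)) :=
    contDiff_one_iff_deriv.1 hF2
  constructor
  · rintro ⟨K₀, K₁, hK₀, hK₁, h⟩
    refine ⟨K₀, K₁, hK₀, le_of_lt hK₁, fun x => ?_⟩
    have hC : 0 ≤ K₀ + K₁ * |deriv F x| := by positivity
    have := norm_deriv_le_of_lip' (𝕜 := ℝ) (f := deriv F) (x₀ := x) hC ?_
    · simpa using this
    · have hball : Metric.ball x (1 / K₁) ∈ nhds x :=
        Metric.ball_mem_nhds x (by positivity)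
      filter_upwards [hball] with y hy
      have : |y - x| ≤ 1 / K₁ := by
        rw [Metric.mem_ball, Real.dist_eq] at hy
        exact le_of_lt hy
      simpa [Real.norm_eq_abs] using h x y this
  · rintro ⟨L₀, L₁, hL₀, hL₁, h⟩
    refine ⟨2 * L₀, max (2 * L₁) 1, by linarith, lt_of_lt_of_le one_pos (le_max_right _ _),
      fun x y hxy => ?_⟩
    set K₁ := max (2 * L₁) 1 with hK₁def
    have hK₁pos : 0 < K₁ := lt_of_lt_of_le one_pos (le_max_right _ _)
    have hK₁L : 2 * L₁ ≤ K₁ := le_max_left _ _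
    have hsmall : L₁ * |y - x| ≤ 1 / 2 := by
      have h1 : |y - x| ≤ 1 / K₁ := hxy
      have h2 : K₁ * |y - x| ≤ 1 := by
        rw [le_div_iff₀ hK₁pos, mul_comm] at h1; linarith
      nlinarith [abs_nonneg (y - x)]
    -- max of |deriv F t - deriv F x| on uIcc x y
    have hcomp : IsCompact (Set.uIcc x y) := isCompact_uIcc
    have hcont : ContinuousOn (fun t => |deriv F t - deriv F x|) (Set.uIcc x y) :=
      ((hF2.continuous.sub continuous_const).abs).continuousOn
    obtain ⟨c, hc, hmax⟩ := hcomp.exists_isMaxOn ⟨x, Set.left_mem_uIcc⟩ hcont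
    set M := |deriv F c - deriv F x| with hMdef
    have hM0 : 0 ≤ M := abs_nonneg _
    set C := L₀ + L₁ * (|deriv F x| + M) with hCdef
    have hbound : ∀ t ∈ Set.uIcc x y, ‖deriv (deriv F) t‖ ≤ C := by
      intro t ht
      have h1 : |deriv F t| ≤ |deriv F x| + M := by
        have := hmax ht
        simp only [hMdef] at this ⊢
        have h2 : |deriv F t - deriv F x| ≤ M := this
        have := abs_sub_abs_le_abs_sub (deriv F t) (deriv F x)
        linarith
      have := h t
      simp only [Real.norm_eq_abs]
      nlinarith
    have key : ∀ t ∈ Set.uIcc x y,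
        |deriv F t - deriv F x| ≤ C * |t - x| := by
      intro t ht
      have := (convex_uIcc x y).norm_image_sub_le_of_norm_deriv_le (f := deriv F)
        (fun s _ => hdF.1 s) hbound Set.left_mem_uIcc ht
      simpa [Real.norm_eq_abs] using this
    have hC0 : 0 ≤ C := by positivity
    have hcx : |c - x| ≤ |y - x| := Set.abs_sub_left_of_mem_uIcc hc
    have hMle : M ≤ C * |y - x| :=
      le_trans (key c hc) (mul_le_mul_of_nonneg_left hcx hC0)
    have hMle2 : M ≤ 2 * (L₀ + L₁ * |deriv F x|) * |y - x| := by
      nlinarith [abs_nonneg (y - x), abs_nonneg (deriv F x)]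
    have hfin := key y Set.right_mem_uIcc
    have habs : 0 ≤ |y - x| := abs_nonneg _
    have habsx : 0 ≤ |deriv F x| := abs_nonneg _
    nlinarith [mul_le_mul_of_nonneg_right hK₁L habsx]
end

section
/- Let F: ℝ^d → ℝ be differentiable and coordinate-wise (L0, L1)-smooth with L0_j = L₀ and L1_j = L₁ for all j ∈ {1,…,d}, where L₀, L₁ ≥ 0. Then for all x, y ∈ ℝ^d with ‖y − x‖₂ ≤ 1/L₁ (no constraint if L₁ = 0): ‖∇F(y) − ∇F(x)‖₂ ≤ (√2·L₀ + √2·L₁·‖∇F(x)‖₂)·‖y − x‖₂. -/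
open scoped BigOperators

/-- Coordinate-wise `(L₀, L₁)`-smoothness with equal constants implies the global
relaxed smoothness condition on gradient differences (up to a factor `√2`). -/
theorem coordinatewise_smooth_implies_global {d : ℕ} (hd : 0 < d)
    (F : EuclideanSpace ℝ (Fin d) → ℝ)
    (hdiff : Differentiable ℝ F)
    (L₀ L₁ : ℝ) (hL₀ : 0 ≤ L₀) (hL₁ : 0 ≤ L₁)
    (hsmooth : ∀ y z : EuclideanSpace ℝ (Fin d),
      (L₁ = 0 ∨ ‖z - y‖ ≤ 1 / L₁) →
      ∀ j, |gradient F z j - gradient F y j| ≤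
        (L₀ / Real.sqrt d + L₁ * |gradient F y j|) * ‖z - y‖) :
    ∀ y z : EuclideanSpace ℝ (Fin d), (L₁ = 0 ∨ ‖z - y‖ ≤ 1 / L₁) →
      ‖gradient F z - gradient F y‖ ≤
        (Real.sqrt 2 * L₀ + Real.sqrt 2 * L₁ * ‖gradient F y‖) * ‖z - y‖ := by
  intro y z hcond
  set r := ‖z - y‖ with hr
  have hr0 : 0 ≤ r := norm_nonneg _
  set a := gradient F y with ha
  set b := gradient F z with hb
  have hj : ∀ j, |b j - a j| ≤ (L₀ / Real.sqrt d + L₁ * |a j|) * r :=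
    hsmooth y z hcond
  have hd' : (0:ℝ) < (d:ℝ) := by exact_mod_cast hd
  have hsqd : (0:ℝ) < Real.sqrt d := Real.sqrt_pos.mpr hd'
  have hsqdsq : Real.sqrt d ^ 2 = (d:ℝ) := Real.sq_sqrt hd'.le
  have hnormg : ‖b - a‖ ^ 2 = ∑ j, (b j - a j) ^ 2 := by
    rw [EuclideanSpace.norm_eq, Real.sq_sqrt (by positivity)]
    simp [sq_abs]
  have hnorma : ‖a‖ ^ 2 = ∑ j, (a j) ^ 2 := by
    rw [EuclideanSpace.norm_eq, Real.sq_sqrt (by positivity)]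
    simp [sq_abs]
  have hna : 0 ≤ ‖a‖ := norm_nonneg _
  have key : ‖b - a‖ ^ 2 ≤ (2 * L₀ ^ 2 + 2 * L₁ ^ 2 * ‖a‖ ^ 2) * r ^ 2 := by
    rw [hnormg]
    calc ∑ j, (b j - a j) ^ 2
        ≤ ∑ j, (2 * (L₀ ^ 2 / d) + 2 * L₁ ^ 2 * (a j) ^ 2) * r ^ 2 := by
          apply Finset.sum_le_sum
          intro j _
          have h1 := hj j
          have h2 : (b j - a j) ^ 2 ≤ ((L₀ / Real.sqrt d + L₁ * |a j|) * r) ^ 2 := by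
            have habs : 0 ≤ |b j - a j| := abs_nonneg _
            calc (b j - a j) ^ 2 = |b j - a j| ^ 2 := (sq_abs _).symm
              _ ≤ ((L₀ / Real.sqrt d + L₁ * |a j|) * r) ^ 2 :=
                pow_le_pow_left₀ habs h1 2
          refine h2.trans ?_
          have hLd : (L₀ / Real.sqrt d) ^ 2 = L₀ ^ 2 / d := by
            rw [div_pow, hsqdsq]
          set X := L₀ / Real.sqrt d with hX
          set Y := L₁ * |a j| with hY
          have hXY : (X + Y) ^ 2 ≤ 2 * X ^ 2 + 2 * Y ^ 2 := by nlinarith [sq_nonneg (X - Y)]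
          have hYsq : Y ^ 2 = L₁ ^ 2 * (a j) ^ 2 := by
            rw [hY, mul_pow, sq_abs]
          calc ((X + Y) * r) ^ 2 = (X + Y) ^ 2 * r ^ 2 := by ring
            _ ≤ (2 * X ^ 2 + 2 * Y ^ 2) * r ^ 2 :=
              mul_le_mul_of_nonneg_right hXY (sq_nonneg r)
            _ = (2 * (L₀ ^ 2 / d) + 2 * L₁ ^ 2 * (a j) ^ 2) * r ^ 2 := by
              rw [hLd, hYsq]; ring
      _ = (2 * L₀ ^ 2 + 2 * L₁ ^ 2 * ‖a‖ ^ 2) * r ^ 2 := by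
          rw [hnorma, ← Finset.sum_mul]
          congr 1
          rw [Finset.sum_add_distrib, Finset.sum_const, Finset.card_univ,
            Fintype.card_fin, ← Finset.mul_sum]
          field_simp
          have hdc : (d:ℝ) * (2 * L₀ ^ 2 / d) = 2 * L₀ ^ 2 := by field_simp
          rw [nsmul_eq_mul, hdc]; ring
  have hRHS : 0 ≤ (Real.sqrt 2 * L₀ + Real.sqrt 2 * L₁ * ‖a‖) * r := by positivity
  have hsq2 : Real.sqrt 2 ^ 2 = 2 := Real.sq_sqrt (by norm_num)
  have key2 : ‖b - a‖ ^ 2 ≤ ((Real.sqrt 2 * L₀ + Real.sqrt 2 * L₁ * ‖a‖) * r) ^ 2 := by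
    refine key.trans ?_
    have : ((Real.sqrt 2 * L₀ + Real.sqrt 2 * L₁ * ‖a‖) * r) ^ 2
        = (2 * L₀ ^ 2 + 2 * L₁ ^ 2 * ‖a‖ ^ 2 + 4 * L₀ * L₁ * ‖a‖) * r ^ 2 := by
      have : (Real.sqrt 2 * L₀ + Real.sqrt 2 * L₁ * ‖a‖) ^ 2
          = 2 * L₀ ^ 2 + 2 * L₁ ^ 2 * ‖a‖ ^ 2 + 4 * L₀ * L₁ * ‖a‖ := by
        nlinarith [hsq2]
      rw [mul_pow, this]
    rw [this, add_mul]
    have hB : (0:ℝ) ≤ 4 * L₀ * L₁ * ‖a‖ * r ^ 2 := by positivity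
    linarith
  exact (pow_le_pow_iff_left₀ (norm_nonneg (b - a)) hRHS two_ne_zero).mp key2
end

section
/- Let F: ℝ^d → ℝ be differentiable and coordinate-wise (L0, L1)-smooth. Then for any x, y ∈ ℝ^d with ‖y − x‖₂ ≤ 1/‖L1‖_∞: F(y) ≤ F(x) + ⟨∇F(x), y − x⟩ + Σ_{j=1}^d ((L0_j/√d + L1_j·|∂_j F(x)|)·‖y − x‖₂ / 2)·|y_j − x_j|. -/
open scoped BigOperators

/-- Descent lemma under coordinate-wise `(L0, L1)`-smoothness. -/
theorem descent_lemma_coordinatewise_relaxed_smooth {d : ℕ} (hd : 0 < d)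
    (F : EuclideanSpace ℝ (Fin d) → ℝ)
    (hdiff : Differentiable ℝ F)
    (L0 L1 : Fin d → ℝ) (hL0 : ∀ j, 0 ≤ L0 j) (hL1 : ∀ j, 0 ≤ L1 j)
    (hsmooth : ∀ y z : EuclideanSpace ℝ (Fin d), ‖z - y‖ ≤ 1 / ‖L1‖ →
      ∀ j, |gradient F z j - gradient F y j| ≤
        (L0 j / Real.sqrt d + L1 j * |gradient F y j|) * ‖z - y‖) :
    ∀ y z : EuclideanSpace ℝ (Fin d), ‖z - y‖ ≤ 1 / ‖L1‖ →
      F z ≤ F y + (inner ℝ (gradient F y) (z - y) : ℝ) +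
        ∑ j, (L0 j / Real.sqrt d + L1 j * |gradient F y j|) * ‖z - y‖ / 2 *
          |z j - y j| := by
  intro y z hzy
  set v : EuclideanSpace ℝ (Fin d) := z - y with hv
  set C : Fin d → ℝ := fun j => L0 j / Real.sqrt d + L1 j * |gradient F y j| with hC
  have hCnn : ∀ j, 0 ≤ C j := fun j =>
    add_nonneg (div_nonneg (hL0 j) (Real.sqrt_nonneg d)) (mul_nonneg (hL1 j) (abs_nonneg _))
  set K : ℝ := ∑ j, C j * ‖v‖ * |v j| with hK
  have hline : ∀ t : ℝ, HasDerivAt (fun s : ℝ => y + s • v) v t := by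
    intro t
    simpa using ((hasDerivAt_id t).smul_const v).const_add y
  have hphi : ∀ t : ℝ, HasDerivAt (fun s : ℝ => F (y + s • v))
      (inner ℝ (gradient F (y + t • v)) v : ℝ) t := by
    intro t
    have h1 := ((hdiff (y + t • v)).hasGradientAt.hasFDerivAt).comp_hasDerivAt t (hline t)
    rw [← InnerProductSpace.toDual_apply_apply]
    exact h1
  set h : ℝ → ℝ := fun t => F (y + t • v) - F y - t * (inner ℝ (gradient F y) v : ℝ)
      - t ^ 2 / 2 * K with hh
  have hderiv : ∀ t : ℝ, HasDerivAt h
      ((inner ℝ (gradient F (y + t • v)) v : ℝ) - (inner ℝ (gradient F y) v : ℝ) - t * K) t := by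
    intro t
    have h2 := (((hphi t).sub_const (F y)).sub
        ((hasDerivAt_id t).mul_const (inner ℝ (gradient F y) v : ℝ))).sub
        (((hasDerivAt_pow 2 t).div_const 2).mul_const K)
    refine HasDerivAt.congr_deriv h2 ?_
    ring
  have hnonpos : ∀ t ∈ Set.Icc (0:ℝ) 1,
      (inner ℝ (gradient F (y + t • v)) v : ℝ) - (inner ℝ (gradient F y) v : ℝ) - t * K ≤ 0 := by
    intro t ht
    obtain ⟨ht0, ht1⟩ := ht
    have hx : ‖(y + t • v) - y‖ = t * ‖v‖ := by
      simp [norm_smul, abs_of_nonneg ht0]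
    have hxle : ‖(y + t • v) - y‖ ≤ 1 / ‖L1‖ := by
      rw [hx]
      calc t * ‖v‖ ≤ 1 * ‖v‖ :=
            mul_le_mul_of_nonneg_right ht1 (norm_nonneg v)
        _ = ‖v‖ := one_mul _
        _ ≤ 1 / ‖L1‖ := hzy
    have hsm := hsmooth y (y + t • v) hxle
    have hinner : (inner ℝ (gradient F (y + t • v)) v : ℝ) - (inner ℝ (gradient F y) v : ℝ)
        = ∑ j, (gradient F (y + t • v) j - gradient F y j) * v j := by
      rw [← inner_sub_left]
      simp [PiLp.inner_apply, RCLike.inner_apply, mul_comm]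
    rw [hinner, sub_nonpos, hK, Finset.mul_sum]
    apply Finset.sum_le_sum
    intro j _
    calc (gradient F (y + t • v) j - gradient F y j) * v j
        ≤ |gradient F (y + t • v) j - gradient F y j| * |v j| := by
          rw [← abs_mul]; exact le_abs_self _
      _ ≤ (C j * ‖(y + t • v) - y‖) * |v j| :=
          mul_le_mul_of_nonneg_right (hsm j) (abs_nonneg _)
      _ = t * (C j * ‖v‖ * |v j|) := by rw [hx]; ring
  have hanti : AntitoneOn h (Set.Icc (0:ℝ) 1) := by
    apply antitoneOn_of_deriv_nonpos (convex_Icc 0 1)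
    · exact fun x _ => (hderiv x).continuousAt.continuousWithinAt
    · exact fun x _ => (hderiv x).differentiableAt.differentiableWithinAt
    · intro x hx
      rw [interior_Icc] at hx
      rw [(hderiv x).deriv]
      exact hnonpos x ⟨hx.1.le, hx.2.le⟩
  have h10 : h 1 ≤ h 0 :=
    hanti (Set.left_mem_Icc.2 zero_le_one) (Set.right_mem_Icc.2 zero_le_one) zero_le_one
  have hy0 : (y : EuclideanSpace ℝ (Fin d)) + (0:ℝ) • v = y := by simp
  have hy1 : (y : EuclideanSpace ℝ (Fin d)) + (1:ℝ) • v = z := by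
    simp [hv]
  have h0 : h 0 = 0 := by simp [hh, hy0]
  have h1 : h 1 = F z - F y - (inner ℝ (gradient F y) v : ℝ) - K / 2 := by
    show F (y + (1:ℝ) • v) - F y - 1 * (inner ℝ (gradient F y) v : ℝ)
        - (1:ℝ) ^ 2 / 2 * K = _
    rw [hy1]; ring
  have hKey : F z ≤ F y + (inner ℝ (gradient F y) v : ℝ) + K / 2 := by
    have := h10
    rw [h0, h1] at this
    linarith
  have hsum : K / 2 = ∑ j, C j * ‖v‖ / 2 * |z j - y j| := by
    rw [hK, Finset.sum_div]
    apply Finset.sum_congr rfl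
    intro j _
    have : v j = z j - y j := by simp [hv]
    rw [this]; ring
  calc F z ≤ F y + (inner ℝ (gradient F y) v : ℝ) + K / 2 := hKey
    _ = F y + (inner ℝ (gradient F y) v : ℝ) +
        ∑ j, C j * ‖v‖ / 2 * |z j - y j| := by rw [hsum]
end
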